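/- arXiv:1611.00082 — 5 statements merged into one kernel-verified Lean document; each statement's English description precedes it below -/
import Mathlib

section
/- For every polynomial u of degree at most k-1 on [-1,1] with u not identically zero, 2·u(1)² ≤ k² · ∫_{-1}^{1} u(ξ)² dξ. -/
/-!
With `Pₙ` the Legendre polynomials, every `u` of degree `< k` is `∑_{n<k} cₙ Pₙ`. Orthogonality
gives `∫_{-1}^{1} u² = ∑ cₙ² ‖Pₙ‖²` with `‖Pₙ‖² = 2 / (2n + 1)`, while `u(1) = ∑ cₙ` since
`Pₙ(1) = 1`. Cauchy–Schwarz then bounds `u(1)²` by `(∑_{n<k} (2n + 1) / 2) ∫ u² = k² / 2 ∫ u²`.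
The norms come from Rodrigues' formula: integrating by parts `n` times reduces `‖Pₙ‖²` to
`∫ (x² - 1)ⁿ`, which satisfies a two-term recurrence.
-/

open Polynomial Finset
open scoped Nat

namespace Polynomial

theorem eval_iterate_derivative_X_sub_C_pow_mul {R : Type*} [CommRing R] (a : R) (n : ℕ)
    (p : R[X]) : (derivative^[n] ((X - C a) ^ n * p)).eval a = n ! * p.eval a := by
  rw [iterate_derivative_mul, eval_finsetSum, sum_eq_single_of_mem 0 (mem_range.mpr n.succ_pos)]
  · simp [iterate_derivative_X_sub_pow_self]
  · intro i hi hi0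
    rw [iterate_derivative_X_sub_pow, Nat.sub_sub_self (mem_range_succ_iff.mp hi)]
    simp [hi0]

theorem Monic.iterate_derivative_natDegree {R : Type*} [CommRing R] {p : R[X]}
    (hp : p.Monic) : derivative^[p.natDegree] p = C (p.natDegree ! : R) := by
  have hdeg : (derivative^[p.natDegree] p).natDegree ≤ 0 := by
    simpa using natDegree_iterate_derivative p p.natDegree
  rw [eq_C_of_natDegree_le_zero hdeg, coeff_iterate_derivative, zero_add, Nat.descFactorial_self,
    hp.coeff_natDegree, nsmul_one]

theorem exists_sum_smul_eq_of_degree_eq {K : Type*} [Field K] {p : ℕ → K[X]}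
    (hp : ∀ i, (p i).degree = i) {k : ℕ} {u : K[X]} (hu : u.degree < k) :
    ∃ c : ℕ → K, ∑ i ∈ range k, c i • p i = u := by
  let S : Sequence K := ⟨p, hp⟩
  rw [← Submodule.mem_span_image_finset_iff_exists_fun', coe_range,
    S.span_degreeLT fun i _ ↦ (leadingCoeff_ne_zero.mpr (S.ne_zero i)).isUnit]
  exact mem_degreeLT.mpr hu

noncomputable def intervalIntegralₗ (a b : ℝ) : ℝ[X] →ₗ[ℝ] ℝ where
  toFun p := ∫ x in a..b, p.eval x
  map_add' p q := by
    simpa using intervalIntegral.integral_add (p.continuous.intervalIntegrable a b)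
      (q.continuous.intervalIntegrable a b)
  map_smul' c p := by simp [intervalIntegral.integral_const_mul]

variable {a b : ℝ}

theorem intervalIntegralₗ_apply (p : ℝ[X]) : intervalIntegralₗ a b p = ∫ x in a..b, p.eval x :=
  rfl

theorem intervalIntegralₗ_derivative (p : ℝ[X]) :
    intervalIntegralₗ a b (derivative p) = p.eval b - p.eval a :=
  intervalIntegral.integral_eq_sub_of_hasDerivAt (fun x _ ↦ p.hasDerivAt x)
    (p.derivative.continuous.intervalIntegrable a b)

theorem intervalIntegralₗ_mul_derivative (p q : ℝ[X]) :
    intervalIntegralₗ a b (p * derivative q) =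
      p.eval b * q.eval b - p.eval a * q.eval a - intervalIntegralₗ a b (derivative p * q) := by
  simp only [intervalIntegralₗ_apply, eval_mul]
  exact intervalIntegral.integral_mul_deriv_eq_deriv_mul (fun x _ ↦ p.hasDerivAt x)
    (fun x _ ↦ q.hasDerivAt x) (p.derivative.continuous.intervalIntegrable a b)
    (q.derivative.continuous.intervalIntegrable a b)

theorem intervalIntegralₗ_iterate_derivative_mul {w : ℝ[X]} {n : ℕ}
    (hw : ∀ j < n, (derivative^[j] w).eval a = 0 ∧ (derivative^[j] w).eval b = 0) (q : ℝ[X]) :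
    intervalIntegralₗ a b (derivative^[n] w * q) =
      (-1) ^ n * intervalIntegralₗ a b (w * derivative^[n] q) := by
  induction n generalizing w with
  | zero => simp
  | succ n ih =>
    have hw' : ∀ j < n, (derivative^[j] (derivative w)).eval a = 0 ∧
        (derivative^[j] (derivative w)).eval b = 0 := fun j hj ↦ hw (j + 1) (by omega)
    obtain ⟨ha, hb⟩ := hw 0 n.succ_pos
    simp only [Function.iterate_zero_apply] at ha hb
    rw [Function.iterate_succ_apply, ih hw', Function.iterate_succ_apply' derivative n q,
      intervalIntegralₗ_mul_derivative, ha, hb]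
    ring

theorem intervalIntegralₗ_sq_nonneg (hab : a ≤ b) (p : ℝ[X]) :
    0 ≤ intervalIntegralₗ a b (p ^ 2) :=
  intervalIntegral.integral_nonneg hab fun x _ ↦ by simpa using sq_nonneg (p.eval x)

theorem eval_iterate_derivative_X_sq_sub_one_pow {R : Type*} [CommRing R] {n j : ℕ} (hj : j < n)
    {x : R} (hx : x ^ 2 = 1) : (derivative^[j] ((X ^ 2 - 1 : R[X]) ^ n)).eval x = 0 := by
  obtain ⟨r, hr⟩ := pow_sub_dvd_iterate_derivative_pow (X ^ 2 - 1 : R[X]) n j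
  rw [hr, eval_mul, eval_pow]
  simp [hx, Nat.sub_ne_zero_of_lt hj]

theorem monic_X_sq_sub_one_pow {R : Type*} [CommRing R] (n : ℕ) :
    ((X ^ 2 - 1 : R[X]) ^ n).Monic := by
  simpa using (monic_X_pow_sub_C (1 : R) two_ne_zero).pow n

theorem natDegree_X_sq_sub_one_pow {R : Type*} [CommRing R] [Nontrivial R] (n : ℕ) :
    ((X ^ 2 - 1 : R[X]) ^ n).natDegree = 2 * n := by
  rw [← C_1, (monic_X_pow_sub_C (1 : R) two_ne_zero).natDegree_pow, natDegree_X_pow_sub_C,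
    mul_comm]

/-- `rodrigues n = 2ⁿ n! Pₙ`, where `Pₙ` is the `n`-th Legendre polynomial. -/
noncomputable def rodrigues (n : ℕ) : ℝ[X] := derivative^[n] ((X ^ 2 - 1) ^ n)

theorem degree_rodrigues (n : ℕ) : (rodrigues n).degree = n := by
  have hle : (rodrigues n).natDegree ≤ n := by
    have := natDegree_iterate_derivative ((X ^ 2 - 1 : ℝ[X]) ^ n) n
    rw [natDegree_X_sq_sub_one_pow] at this
    unfold rodrigues
    omega
  refine degree_eq_of_le_of_coeff_ne_zero ((degree_le_natDegree).trans (by exact_mod_cast hle)) ?_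
  rw [rodrigues, coeff_iterate_derivative, ← two_mul, ← natDegree_X_sq_sub_one_pow (R := ℝ),
    ← leadingCoeff, (monic_X_sq_sub_one_pow n).leadingCoeff, nsmul_one, Nat.cast_ne_zero,
    natDegree_X_sq_sub_one_pow, Ne, Nat.descFactorial_eq_zero_iff_lt]
  omega

theorem eval_one_rodrigues (n : ℕ) : (rodrigues n).eval 1 = n ! * 2 ^ n := by
  have h : (X ^ 2 - 1 : ℝ[X]) ^ n = (X - C 1) ^ n * (X + 1) ^ n := by
    rw [← mul_pow, C_1]; ring
  rw [rodrigues, h, eval_iterate_derivative_X_sub_C_pow_mul]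
  norm_num

theorem intervalIntegralₗ_rodrigues_mul (n : ℕ) (q : ℝ[X]) :
    intervalIntegralₗ (-1) 1 (rodrigues n * q) =
      (-1) ^ n * intervalIntegralₗ (-1) 1 ((X ^ 2 - 1) ^ n * derivative^[n] q) :=
  intervalIntegralₗ_iterate_derivative_mul (fun _ hj ↦
    ⟨eval_iterate_derivative_X_sq_sub_one_pow hj (by norm_num),
      eval_iterate_derivative_X_sq_sub_one_pow hj (by norm_num)⟩) q

theorem intervalIntegralₗ_rodrigues_mul_rodrigues {m n : ℕ} (h : m ≠ n) :
    intervalIntegralₗ (-1) 1 (rodrigues m * rodrigues n) = 0 := by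
  wlog hmn : m < n generalizing m n
  · rw [mul_comm]
    exact this h.symm (by omega)
  rw [mul_comm, intervalIntegralₗ_rodrigues_mul, iterate_derivative_eq_zero, mul_zero, map_zero,
    mul_zero]
  rwa [natDegree_eq_of_degree_eq_some (degree_rodrigues m)]

theorem intervalIntegralₗ_rodrigues_sq (n : ℕ) :
    intervalIntegralₗ (-1) 1 (rodrigues n ^ 2) =
      (-1) ^ n * (2 * n) ! * intervalIntegralₗ (-1) 1 ((X ^ 2 - 1) ^ n) := by
  have htop : derivative^[n] (rodrigues n) = C ((2 * n) ! : ℝ) := by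
    rw [rodrigues, ← Function.iterate_add_apply, ← two_mul, ← natDegree_X_sq_sub_one_pow (R := ℝ),
      (monic_X_sq_sub_one_pow n).iterate_derivative_natDegree]
  rw [sq, intervalIntegralₗ_rodrigues_mul, htop, mul_comm _ (C _), ← smul_eq_C_mul, map_smul,
    smul_eq_mul]
  ring

theorem derivative_X_mul_X_sq_sub_one_pow_succ (n : ℕ) :
    derivative (X * (X ^ 2 - 1 : ℝ[X]) ^ (n + 1)) =
      (2 * n + 3 : ℝ) • (X ^ 2 - 1) ^ (n + 1) + (2 * n + 2 : ℝ) • (X ^ 2 - 1) ^ n := by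
  simp only [derivative_mul, derivative_X, derivative_pow, derivative_sub, derivative_one,
    smul_eq_C_mul]
  simp only [map_add, map_mul, map_ofNat, map_natCast, map_one, Nat.cast_add, Nat.cast_one,
    Nat.add_sub_cancel]
  ring

theorem factorial_mul_intervalIntegralₗ_X_sq_sub_one_pow (n : ℕ) :
    ((2 * n + 1) ! : ℝ) * intervalIntegralₗ (-1) 1 ((X ^ 2 - 1) ^ n) =
      (-1) ^ n * 2 ^ (2 * n + 1) * (n ! : ℝ) ^ 2 := by
  induction n with
  | zero => norm_num [intervalIntegralₗ_apply]
  | succ n ih =>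
    have hrec := intervalIntegralₗ_derivative (a := -1) (b := 1) (X * (X ^ 2 - 1 : ℝ[X]) ^ (n + 1))
    rw [derivative_X_mul_X_sq_sub_one_pow_succ, map_add, map_smul, map_smul] at hrec
    norm_num at hrec
    have hfac : ((2 * (n + 1) + 1) ! : ℝ) = (2 * n + 3) * (2 * n + 2) * (2 * n + 1) ! := by
      rw [show 2 * (n + 1) + 1 = (2 * n + 1) + 1 + 1 by ring, Nat.factorial_succ, Nat.factorial_succ]
      push_cast
      ring
    rw [hfac, Nat.factorial_succ n]
    push_cast
    linear_combination (2 * (n : ℝ) + 2) * (2 * n + 1) ! * hrec - (2 * (n : ℝ) + 2) ^ 2 * ih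

theorem two_mul_eval_one_rodrigues_sq (n : ℕ) :
    2 * (rodrigues n).eval 1 ^ 2 = (2 * n + 1) * intervalIntegralₗ (-1) 1 (rodrigues n ^ 2) := by
  have h := factorial_mul_intervalIntegralₗ_X_sq_sub_one_pow n
  rw [intervalIntegralₗ_rodrigues_sq, eval_one_rodrigues]
  have hsign : ((-1 : ℝ) ^ n) ^ 2 = 1 := by rw [← pow_mul, pow_mul']; simp
  rw [Nat.factorial_succ] at h
  push_cast at h
  linear_combination (-(-1 : ℝ) ^ n) * h - (2 ^ (2 * n + 1) * (n ! : ℝ) ^ 2) * hsign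

theorem intervalIntegralₗ_sum_smul_rodrigues_sq (s : Finset ℕ) (c : ℕ → ℝ) :
    intervalIntegralₗ (-1) 1 ((∑ i ∈ s, c i • rodrigues i) ^ 2) =
      ∑ i ∈ s, c i ^ 2 * intervalIntegralₗ (-1) 1 (rodrigues i ^ 2) := by
  simp only [sq, sum_mul_sum, smul_mul_smul, map_sum, map_smul, smul_eq_mul]
  refine sum_congr rfl fun i hi ↦ ?_
  rw [sum_eq_single_of_mem i hi fun j _ hji ↦ by
    rw [intervalIntegralₗ_rodrigues_mul_rodrigues hji.symm, mul_zero]]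

end Polynomial

theorem Finset.sum_range_two_mul_add_one {R : Type*} [CommSemiring R] (k : ℕ) :
    ∑ n ∈ range k, (2 * n + 1 : R) = k ^ 2 := by
  induction k with
  | zero => simp
  | succ k ih => rw [sum_range_succ, ih]; push_cast; ring

theorem stmt_6_general (k : ℕ) (u : Polynomial ℝ)
    (hdeg : u.degree < (k : ℕ)) :
    2 * (u.eval 1) ^ 2 ≤ (k : ℝ) ^ 2 * ∫ ξ in (-1 : ℝ)..1, (u.eval ξ) ^ 2 := by
  obtain ⟨c, rfl⟩ := exists_sum_smul_eq_of_degree_eq degree_rodrigues hdeg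
  have hint : ∫ ξ in (-1 : ℝ)..1, ((∑ n ∈ range k, c n • rodrigues n).eval ξ) ^ 2 =
      ∑ n ∈ range k, c n ^ 2 * intervalIntegralₗ (-1) 1 (rodrigues n ^ 2) := by
    rw [← intervalIntegralₗ_sum_smul_rodrigues_sq, intervalIntegralₗ_apply]
    simp only [eval_pow]
  have heval : (∑ n ∈ range k, c n • rodrigues n).eval 1 =
      ∑ n ∈ range k, c n * (rodrigues n).eval 1 := by
    simp only [eval_finsetSum, eval_smul, smul_eq_mul]
  have hcs : (∑ n ∈ range k, c n * (rodrigues n).eval 1) ^ 2 ≤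
      (∑ n ∈ range k, c n ^ 2 * intervalIntegralₗ (-1) 1 (rodrigues n ^ 2)) *
        ∑ n ∈ range k, (2 * n + 1 : ℝ) / 2 := by
    refine sum_sq_le_sum_mul_sum_of_sq_le_mul _
      (fun n _ ↦ mul_nonneg (sq_nonneg _) (intervalIntegralₗ_sq_nonneg (by norm_num) _))
      (fun n _ ↦ by positivity) fun n _ ↦ le_of_eq ?_
    linear_combination c n ^ 2 / 2 * two_mul_eval_one_rodrigues_sq n
  rw [← sum_div, sum_range_two_mul_add_one] at hcs
  rw [hint, heval]
  linarith

theorem stmt_6 (k : ℕ) (u : Polynomial ℝ) (hu : u ≠ 0)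
    (hdeg : u.degree < (k : ℕ)) :
    2 * (u.eval 1) ^ 2 ≤ (k : ℝ) ^ 2 * ∫ ξ in (-1 : ℝ)..1, (u.eval ξ) ^ 2 :=
  stmt_6_general k u hdeg
end

section
/- For every real polynomial u of degree at most k-1 on [-1,1], not identically zero, and every real β₁: 2·(u(1) - 2β₁·u'(1))² ≤ k²·(1 - β₁(k²-1) + (β₁²/3)(k²-1)²) · ∫_{-1}^{1} u(ξ)² dξ. -/
open Polynomial intervalIntegral Finset Nat

noncomputable section

namespace Leg

/-- Rodrigues numerator base: (X²-1)ⁿ -/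
def B (n : ℕ) : Polynomial ℝ := ((X : Polynomial ℝ) ^ 2 - 1) ^ n

/-- Unnormalized Legendre polynomial -/
def Q (n : ℕ) : Polynomial ℝ := derivative^[n] (B n)

lemma intble (p : Polynomial ℝ) :
    IntervalIntegrable (fun x => p.eval x) MeasureTheory.volume (-1) 1 :=
  p.continuous.intervalIntegrable _ _

lemma integral_derivative (p : Polynomial ℝ) :
    ∫ x in (-1:ℝ)..1, (derivative p).eval x = p.eval 1 - p.eval (-1) :=
  integral_eq_sub_of_hasDerivAt (fun x _ => p.hasDerivAt x) (intble _)

lemma B_factor (n : ℕ) : B n = (X - C 1) ^ n * (X - C (-1)) ^ n := by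
  rw [B, ← mul_pow]; congr 1; simp; ring

lemma eval_nsmul (m : ℕ) (p : Polynomial ℝ) (x : ℝ) :
    (m • p).eval x = m * p.eval x := by
  simp

/-- boundary vanishing: derivatives of order < n vanish at ±1 -/
lemma boundary_vanish {j n : ℕ} (hj : j < n) (x : ℝ) (hx : x = 1 ∨ x = -1) :
    (derivative^[j] (B n)).eval x = 0 := by
  rw [B_factor, iterate_derivative_mul, eval_finset_sum]
  refine Finset.sum_eq_zero fun i hi => ?_
  simp only [Finset.mem_range, Nat.lt_succ_iff] at hi
  rw [eval_nsmul, eval_mul, iterate_derivative_X_sub_pow, iterate_derivative_X_sub_pow,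
    eval_nsmul, eval_nsmul, eval_pow, eval_pow, eval_sub, eval_sub, eval_X, eval_C, eval_C]
  rcases hx with rfl | rfl
  · have h1 : (1:ℝ) - 1 = 0 := by ring
    rw [h1, zero_pow (by omega : n - (j - i) ≠ 0)]
    ring
  · have h1 : (-1:ℝ) - -1 = 0 := by ring
    rw [h1, zero_pow (by omega : n - i ≠ 0)]
    ring

/-- Integration by parts for polynomials on [-1,1] -/
lemma ibp (p q : Polynomial ℝ) :
    ∫ x in (-1:ℝ)..1, (derivative p).eval x * q.eval x =
      p.eval 1 * q.eval 1 - p.eval (-1) * q.eval (-1)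
        - ∫ x in (-1:ℝ)..1, p.eval x * (derivative q).eval x := by
  have h := integral_derivative (p * q)
  rw [derivative_mul] at h
  have h2 : ∫ x in (-1:ℝ)..1, (derivative p * q + p * derivative q).eval x
      = (∫ x in (-1:ℝ)..1, (derivative p).eval x * q.eval x)
        + ∫ x in (-1:ℝ)..1, p.eval x * (derivative q).eval x := by
    have e1 : (fun x => (derivative p * q).eval x)
        = fun x => (derivative p).eval x * q.eval x := by ext x; simp
    have e2 : (fun x => (p * derivative q).eval x)
        = fun x => p.eval x * (derivative q).eval x := by ext x; simp
    rw [← integral_add (e1 ▸ intble (derivative p * q)) (e2 ▸ intble (p * derivative q))]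
    congr 1; ext x; simp
  rw [h2, eval_mul, eval_mul] at h
  linarith

/-- Reduction: move derivatives from Q n to the test polynomial -/
lemma reduction (n : ℕ) (f : Polynomial ℝ) :
    ∀ j ≤ n, ∫ x in (-1:ℝ)..1, (Q n).eval x * f.eval x =
      (-1:ℝ)^j * ∫ x in (-1:ℝ)..1,
        (derivative^[n-j] (B n)).eval x * (derivative^[j] f).eval x := by
  intro j hj
  induction j with
  | zero => simp [Q]
  | succ j ih =>
    rw [ih (by omega)]
    have hnj : n - j = (n - (j+1)) + 1 := by omega
    have hD : derivative^[n-j] (B n) = derivative (derivative^[n-(j+1)] (B n)) := by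
      rw [hnj, Function.iterate_succ_apply']
    rw [hD, ibp,
      boundary_vanish (by omega : n-(j+1) < n) 1 (Or.inl rfl),
      boundary_vanish (by omega : n-(j+1) < n) (-1) (Or.inr rfl)]
    rw [show (∫ x in (-1:ℝ)..1, (derivative^[n-(j+1)] (B n)).eval x
        * (derivative (derivative^[j] f)).eval x)
        = ∫ x in (-1:ℝ)..1, (derivative^[n-(j+1)] (B n)).eval x
        * (derivative^[j+1] f).eval x from by
      rw [← Function.iterate_succ_apply' derivative j f]]
    ring

/-- Orthogonality against lower-degree polynomials -/
lemma orth_lower (n : ℕ) (f : Polynomial ℝ) (hf : f.natDegree < n) :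
    ∫ x in (-1:ℝ)..1, (Q n).eval x * f.eval x = 0 := by
  rw [reduction n f n le_rfl, iterate_derivative_eq_zero hf]
  simp

lemma B_monic (n : ℕ) : (B n).Monic := by
  have : ((X:Polynomial ℝ)^2 - 1) = X^2 - C 1 := by simp
  exact ((this ▸ monic_X_pow_sub_C (1:ℝ) two_ne_zero).pow n)

lemma B_natDegree (n : ℕ) : (B n).natDegree = 2 * n := by
  have : ((X:Polynomial ℝ)^2 - 1) = X^2 - C 1 := by simp
  rw [B, this, (monic_X_pow_sub_C (1:ℝ) two_ne_zero).natDegree_pow,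
    natDegree_X_pow_sub_C]
  ring

lemma D2n_B (n : ℕ) : derivative^[2*n] (B n) = C ((2*n)! : ℝ) := by
  ext m
  rw [coeff_iterate_derivative, coeff_C]
  rcases Nat.eq_zero_or_pos m with rfl | hm
  · have hc : (B n).coeff (0 + 2*n) = 1 := by
      rw [zero_add, ← B_natDegree n]; exact (B_monic n).coeff_natDegree
    rw [hc]; simp [Nat.descFactorial_self]
  · have hc : (B n).coeff (m + 2*n) = 0 :=
      coeff_eq_zero_of_natDegree_lt (by rw [B_natDegree]; omega)
    simp [hc, Nat.pos_iff_ne_zero.mp hm]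

lemma intB : ∀ n : ℕ, ∫ x in (-1:ℝ)..1, ((x:ℝ)^2-1)^n
    = (-1:ℝ)^n * 2^(2*n+1) * (n ! : ℝ)^2 / (2*n+1)! := by
  intro n
  induction n with
  | zero => norm_num
  | succ n ih =>
    have cpow : ∀ m : ℕ, Continuous fun x : ℝ => (x^2-1)^m := by
      intro m; continuity
    have hder : ∀ x ∈ Set.uIcc (-1:ℝ) 1, HasDerivAt (fun x : ℝ => x*(x^2-1)^(n+1))
        ((2*(n:ℝ)+3)*(x^2-1)^(n+1) + (2*(n:ℝ)+2)*(x^2-1)^n) x := by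
      intro x _
      have h1 : HasDerivAt (fun x : ℝ => x^2-1) (2*x) x := by
        simpa using (hasDerivAt_pow 2 x).sub_const 1
      have h2 := h1.pow (n+1)
      have h3 : HasDerivAt (fun x : ℝ => x*(x^2-1)^(n+1)) (1 * (x^2-1)^(n+1) + x * (↑(n + 1) * (x ^ 2 - 1) ^ (n + 1 - 1) * (2 * x))) x := (hasDerivAt_id x).mul h2
      convert h3 using 1
      simp only [Nat.add_sub_cancel, id_eq]
      push_cast
      ring
    have hint : IntervalIntegrable
        (fun x : ℝ => (2*(n:ℝ)+3)*(x^2-1)^(n+1) + (2*(n:ℝ)+2)*(x^2-1)^n)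
        MeasureTheory.volume (-1) 1 :=
      ((continuous_const.mul (cpow (n+1))).add
        (continuous_const.mul (cpow n))).intervalIntegrable _ _
    have hftc := integral_eq_sub_of_hasDerivAt hder hint
    have hz : ((1:ℝ)*((1:ℝ)^2-1)^(n+1) - (-1)*(((-1):ℝ)^2-1)^(n+1)) = 0 := by
      norm_num
    rw [hz] at hftc
    have hJ : (2*(n:ℝ)+3) * (∫ x in (-1:ℝ)..1, (x^2-1)^(n+1))
        + (2*(n:ℝ)+2) * (∫ x in (-1:ℝ)..1, (x^2-1)^n) = 0 := by
      rw [← integral_const_mul, ← integral_const_mul,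
        ← integral_add (show IntervalIntegrable (fun x : ℝ => (2*(n:ℝ)+3)*(x^2-1)^(n+1)) MeasureTheory.volume (-1) 1 from (continuous_const.mul (cpow (n+1))).intervalIntegrable _ _)
          (show IntervalIntegrable (fun x : ℝ => (2*(n:ℝ)+2)*(x^2-1)^n) MeasureTheory.volume (-1) 1 from (continuous_const.mul (cpow n)).intervalIntegrable _ _)]
      exact hftc
    rw [ih] at hJ
    have hfacne : ((2*(n+1)+1)! : ℝ) ≠ 0 := by positivity
    rw [eq_div_iff hfacne]
    have hfac : ((2*(n+1)+1)! : ℝ) = (2*(n:ℝ)+3) * ((2*(n:ℝ)+2) * (2*n+1)!) := by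
      rw [show 2*(n+1)+1 = (2*n+2)+1 by ring, Nat.factorial_succ,
        show 2*n+2 = (2*n+1)+1 from rfl, Nat.factorial_succ]
      push_cast; ring
    have hfac2 : ((n+1)! : ℝ) = ((n:ℝ)+1) * n ! := by
      rw [Nat.factorial_succ]; push_cast; ring
    have hne : ((2*n+1)! : ℝ) ≠ 0 := by positivity
    rw [hfac, hfac2]
    -- (cast already normalized)
    field_simp at hJ
    linear_combination (2*(n:ℝ)+2) * hJ

lemma Q_norm (n : ℕ) : ∫ x in (-1:ℝ)..1, ((Q n).eval x)^2
    = ((2*n)! : ℝ) * 2^(2*n+1) * (n ! : ℝ)^2 / (2*n+1)! := by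
  have hsq : (∫ x in (-1:ℝ)..1, ((Q n).eval x)^2)
      = ∫ x in (-1:ℝ)..1, (Q n).eval x * (Q n).eval x := by
    congr 1; ext x; ring
  rw [hsq, reduction n (Q n) n le_rfl]
  have hDQ : derivative^[n] (Q n) = C ((2*n)! : ℝ) := by
    rw [Q, ← Function.iterate_add_apply, show n + n = 2*n by ring, D2n_B]
  rw [Nat.sub_self, hDQ]
  have h0 : (∫ x in (-1:ℝ)..1, (derivative^[0] (B n)).eval x * (C ((2*n)! : ℝ)).eval x)
      = ((2*n)! : ℝ) * ∫ x in (-1:ℝ)..1, (x^2-1)^n := by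
    rw [← integral_const_mul]
    congr 1; ext x; simp [B]; ring
  rw [h0, intB]
  have hmm : (-1:ℝ)^n * (-1)^n = 1 := by
    rw [← mul_pow]; norm_num
  have hne : ((2*n+1)! : ℝ) ≠ 0 := by positivity
  rw [mul_div_assoc', mul_div_assoc', div_eq_div_iff hne hne]
  linear_combination (((2*n)! : ℝ) * 2^(2*n+1) * (n ! : ℝ)^2 * ((2*n+1)! : ℝ)) * hmm


lemma Q_eval_one (n : ℕ) : (Q n).eval 1 = 2^n * (n ! : ℝ) := by
  rw [Q, B_factor, iterate_derivative_mul, eval_finset_sum]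
  rw [Finset.sum_eq_single 0]
  · rw [Nat.choose_zero_right, one_smul, Nat.sub_zero, eval_mul,
      iterate_derivative_X_sub_pow_self, Function.iterate_zero_apply]
    rw [eval_natCast, eval_pow, eval_sub, eval_X, eval_C]
    norm_num [mul_comm]
  · intro i hi hi0
    simp only [Finset.mem_range, Nat.lt_succ_iff] at hi
    rw [eval_nsmul, eval_mul, iterate_derivative_X_sub_pow,
      eval_nsmul, eval_pow, eval_sub, eval_X, eval_C,
      show n - (n - i) = i from by omega, show (1:ℝ) - 1 = 0 from by ring,
      zero_pow hi0]
    ring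
  · simp

lemma Q_deriv_eval_one (n : ℕ) :
    2 * (derivative (Q n)).eval 1 = (n:ℝ) * (n+1) * 2^n * (n ! : ℝ) := by
  have hQ : derivative (Q n) = derivative^[n+1] (B n) :=
    (Function.iterate_succ_apply' derivative n (B n)).symm
  rw [hQ, B_factor, iterate_derivative_mul, eval_finset_sum]
  rw [Finset.sum_eq_single 1]
  · rw [eval_nsmul, eval_mul, Nat.choose_one_right,
      show n + 1 - 1 = n from rfl, iterate_derivative_X_sub_pow_self, eval_natCast,
      iterate_derivative_X_sub_pow, eval_nsmul, eval_pow, eval_sub, eval_X, eval_C,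
      Nat.descFactorial_one]
    cases n with
    | zero => norm_num
    | succ m =>
      rw [show (1:ℝ) - (-1) = 2 from by norm_num, show m + 1 - 1 = m from rfl,
        Nat.factorial_succ]
      push_cast
      ring
  · intro i hi hi1
    simp only [Finset.mem_range, Nat.lt_succ_iff] at hi
    rcases Nat.eq_zero_or_pos i with rfl | hipos
    · rw [Nat.sub_zero, eval_nsmul, eval_mul, iterate_derivative_X_sub_pow,
        show n.descFactorial (n+1) = 0 from Nat.descFactorial_eq_zero_iff_lt.mpr (by omega)]
      simp
    · have hi2 : 2 ≤ i := by omega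
      rw [eval_nsmul, eval_mul, iterate_derivative_X_sub_pow (c := (1:ℝ)),
        eval_nsmul, eval_pow, eval_sub, eval_X, eval_C,
        show n - (n + 1 - i) = i - 1 from by omega, show (1:ℝ) - 1 = 0 from by ring,
        zero_pow (by omega : i - 1 ≠ 0)]
      ring
  · simp


lemma Q_natDegree_le (n : ℕ) : (Q n).natDegree ≤ n := by
  have := natDegree_iterate_derivative (B n) n
  rw [B_natDegree] at this
  exact this.trans (by omega)

lemma Q_coeff_self (n : ℕ) : (Q n).coeff n = ((2*n).descFactorial n : ℝ) := by
  rw [Q, coeff_iterate_derivative, show n + n = 2*n by ring]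
  have hc : (B n).coeff (2*n) = 1 := by
    rw [← B_natDegree n]; exact (B_monic n).coeff_natDegree
  rw [hc]
  simp

lemma Q_coeff_self_ne (n : ℕ) : (Q n).coeff n ≠ 0 := by
  rw [Q_coeff_self]
  have : (2*n).descFactorial n ≠ 0 := by
    rw [Ne, descFactorial_eq_zero_iff_lt]; omega
  exact_mod_cast this

/-- Representation in the Legendre basis -/
lemma repr : ∀ (k : ℕ) (u : Polynomial ℝ), u.degree < (k:ℕ) →
    ∃ c : ℕ → ℝ, u = ∑ i ∈ Finset.range k, C (c i) * Q i := by
  intro k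
  induction k with
  | zero =>
    intro u hdeg
    have hu : u = 0 := by
      rw [← degree_eq_bot]
      rw [Nat.cast_zero] at hdeg
      exact Nat.WithBot.lt_zero_iff.mp hdeg
    exact ⟨fun _ => 0, by simp [hu]⟩
  | succ k ih =>
    intro u hdeg
    set a : ℝ := u.coeff k / (Q k).coeff k with ha
    have hv : (u - C a * Q k).degree < (k:ℕ) := by
      rw [degree_lt_iff_coeff_zero]
      intro m hm
      have hm' : k ≤ m := by exact_mod_cast hm
      rw [coeff_sub, coeff_C_mul]
      rcases eq_or_lt_of_le hm' with rfl | hlt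
      · rw [ha, div_mul_cancel₀ _ (Q_coeff_self_ne k), sub_self]
      · rw [coeff_eq_zero_of_degree_lt (hdeg.trans_le (by exact_mod_cast hlt)),
          coeff_eq_zero_of_natDegree_lt ((Q_natDegree_le k).trans_lt hlt)]
        ring
    obtain ⟨c, hc⟩ := ih _ hv
    refine ⟨Function.update c k a, ?_⟩
    rw [Finset.sum_range_succ, Function.update_self,
      Finset.sum_congr rfl (fun i hi => by
        rw [Function.update_of_ne (by simp at hi; omega)]),
      ← hc]
    ring

/-- Pairwise orthogonality -/
lemma orth {m n : ℕ} (h : m ≠ n) :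
    ∫ x in (-1:ℝ)..1, (Q m).eval x * (Q n).eval x = 0 := by
  rcases h.lt_or_gt with hlt | hlt
  · rw [show (fun x => (Q m).eval x * (Q n).eval x)
      = fun x => (Q n).eval x * (Q m).eval x from funext fun x => mul_comm _ _]
    exact orth_lower n (Q m) ((Q_natDegree_le m).trans_lt hlt)
  · exact orth_lower m (Q n) ((Q_natDegree_le n).trans_lt hlt)

/-- The sum identity for the sharp constant -/
lemma sum_id (β : ℝ) (k : ℕ) :
    ∑ i ∈ Finset.range k, (2*(i:ℝ)+1) * (1 - β*i*(i+1))^2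
      = (k:ℝ)^2 * (1 - β*((k:ℝ)^2-1) + β^2/3*((k:ℝ)^2-1)^2) := by
  induction k with
  | zero => simp
  | succ k ih =>
    rw [Finset.sum_range_succ, ih]
    push_cast
    ring


/-- squared L² norm of Q i -/
def Nc (i : ℕ) : ℝ := ((2*i)! : ℝ) * 2^(2*i+1) * (i ! : ℝ)^2 / ((2*i+1)! : ℝ)

/-- value of the boundary functional on Q i -/
def dc (β : ℝ) (i : ℕ) : ℝ := 2^i * (i ! : ℝ) * (1 - β*i*(i+1))

lemma Nc_pos (i : ℕ) : 0 < Nc i := by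
  rw [Nc]; positivity

lemma Q_norm' (i : ℕ) : ∫ x in (-1:ℝ)..1, ((Q i).eval x)^2 = Nc i := Q_norm i

lemma dc_ratio (β : ℝ) (i : ℕ) :
    (dc β i)^2 / Nc i = (2*(i:ℝ)+1)/2 * (1 - β*i*(i+1))^2 := by
  rw [dc, Nc]
  have hfac : ((2*i+1)! : ℝ) = (2*(i:ℝ)+1) * ((2*i)! : ℝ) := by
    rw [show 2*i+1 = (2*i)+1 from rfl, Nat.factorial_succ]; push_cast; ring
  have h1 : ((2*i)! : ℝ) ≠ 0 := by positivity
  have h3 : (i ! : ℝ) ≠ 0 := by positivity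
  rw [hfac]
  field_simp
  ring

end Leg

open Leg in
theorem stmt_7 (k : ℕ) (u : Polynomial ℝ) (hu : u ≠ 0)
    (hdeg : u.degree < (k : ℕ)) (β₁ : ℝ) :
    2 * (u.eval 1 - 2 * β₁ * u.derivative.eval 1) ^ 2 ≤
      (k : ℝ) ^ 2 * (1 - β₁ * ((k : ℝ) ^ 2 - 1) + β₁ ^ 2 / 3 * ((k : ℝ) ^ 2 - 1) ^ 2)
        * ∫ ξ in (-1 : ℝ)..1, (u.eval ξ) ^ 2 := by
  classical
  obtain ⟨c, hc⟩ := Leg.repr k u hdeg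
  -- boundary functional
  have hL : u.eval 1 - 2 * β₁ * u.derivative.eval 1
      = ∑ i ∈ Finset.range k, c i * dc β₁ i := by
    have h1 : u.eval 1 = ∑ i ∈ Finset.range k, c i * (Q i).eval 1 := by
      rw [hc, eval_finset_sum]
      exact Finset.sum_congr rfl fun i _ => by simp
    have h2 : u.derivative.eval 1
        = ∑ i ∈ Finset.range k, c i * (derivative (Q i)).eval 1 := by
      rw [hc, derivative_sum, eval_finset_sum]
      refine Finset.sum_congr rfl fun i _ => ?_
      rw [derivative_mul, derivative_C]
      simp
    rw [h1, h2, Finset.mul_sum, ← Finset.sum_sub_distrib]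
    refine Finset.sum_congr rfl fun i _ => ?_
    have e1 := Q_eval_one i
    have e2 := Q_deriv_eval_one i
    rw [dc]
    linear_combination c i * e1 - β₁ * c i * e2
  -- energy
  have hI : (∫ ξ in (-1:ℝ)..1, (u.eval ξ)^2)
      = ∑ i ∈ Finset.range k, (c i)^2 * Nc i := by
    have hexp : (fun ξ : ℝ => (u.eval ξ)^2)
        = fun ξ => ∑ i ∈ Finset.range k, ∑ j ∈ Finset.range k,
            (c i * c j) * ((Q i).eval ξ * (Q j).eval ξ) := by
      funext ξ
      rw [hc, eval_finset_sum, sq, Finset.sum_mul_sum]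
      refine Finset.sum_congr rfl fun i _ => Finset.sum_congr rfl fun j _ => ?_
      simp [eval_mul]
      ring
    have hstep : (∫ ξ in (-1:ℝ)..1, (u.eval ξ)^2)
        = ∫ ξ in (-1:ℝ)..1, ∑ i ∈ Finset.range k, ∑ j ∈ Finset.range k,
            (c i * c j) * ((Q i).eval ξ * (Q j).eval ξ) := by
      rw [hexp]
    rw [hstep, intervalIntegral.integral_finset_sum (fun i _ => show IntervalIntegrable (fun ξ : ℝ => ∑ j ∈ Finset.range k, (c i * c j) * ((Q i).eval ξ * (Q j).eval ξ)) MeasureTheory.volume (-1) 1 from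
      (continuous_finset_sum _ fun j _ =>
        (continuous_const.mul ((Q i).continuous.mul
          (Q j).continuous))).intervalIntegrable _ _)]
    refine Finset.sum_congr rfl fun i hi => ?_
    rw [intervalIntegral.integral_finset_sum (fun j _ => show IntervalIntegrable (fun ξ : ℝ => (c i * c j) * ((Q i).eval ξ * (Q j).eval ξ)) MeasureTheory.volume (-1) 1 from
      (continuous_const.mul ((Q i).continuous.mul
        (Q j).continuous)).intervalIntegrable _ _)]
    rw [Finset.sum_eq_single i]
    · rw [intervalIntegral.integral_const_mul,
        show (∫ x in (-1:ℝ)..1, (Q i).eval x * (Q i).eval x)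
          = ∫ x in (-1:ℝ)..1, ((Q i).eval x)^2 from by congr 1; funext x; ring,
        Q_norm']
      ring
    · intro j _ hji
      rw [intervalIntegral.integral_const_mul, orth (Ne.symm hji), mul_zero]
    · intro hik
      exact absurd hi hik
  -- Cauchy-Schwarz
  have key := Finset.sum_mul_sq_le_sq_mul_sq (Finset.range k)
    (fun i => c i * Real.sqrt (Nc i)) (fun i => dc β₁ i / Real.sqrt (Nc i))
  have hfg : ∀ i, (c i * Real.sqrt (Nc i)) * (dc β₁ i / Real.sqrt (Nc i))
      = c i * dc β₁ i := by
    intro i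
    have h := Real.sqrt_ne_zero'.mpr (Nc_pos i)
    field_simp
  have hf2 : ∀ i, (c i * Real.sqrt (Nc i))^2 = (c i)^2 * Nc i := by
    intro i
    rw [mul_pow, Real.sq_sqrt (Nc_pos i).le]
  have hg2 : ∀ i, (dc β₁ i / Real.sqrt (Nc i))^2
      = (2*(i:ℝ)+1)/2 * (1 - β₁*i*(i+1))^2 := by
    intro i
    rw [div_pow, Real.sq_sqrt (Nc_pos i).le, dc_ratio]
  simp only [hfg, hf2, hg2] at key
  have hsum : ∑ i ∈ Finset.range k, (2*(i:ℝ)+1)/2 * (1 - β₁*i*(i+1))^2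
      = (k:ℝ)^2 * (1 - β₁*((k:ℝ)^2-1) + β₁^2/3*((k:ℝ)^2-1)^2) / 2 := by
    rw [← Leg.sum_id β₁ k, Finset.sum_div]
    exact Finset.sum_congr rfl fun i _ => by ring
  rw [hsum] at key
  rw [hL, hI]
  calc 2 * (∑ i ∈ Finset.range k, c i * dc β₁ i)^2
      ≤ 2 * ((∑ i ∈ Finset.range k, (c i)^2 * Nc i)
          * ((k:ℝ)^2 * (1 - β₁*((k:ℝ)^2-1) + β₁^2/3*((k:ℝ)^2-1)^2) / 2)) := by
        linarith [key]
    _ = (k:ℝ)^2 * (1 - β₁*((k:ℝ)^2-1) + β₁^2/3*((k:ℝ)^2-1)^2)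
          * ∑ i ∈ Finset.range k, (c i)^2 * Nc i := by ring
end
end

section
/- Let v be a real polynomial of degree at most k on an interval I of length h. Then ∫_I (v'(x))² dx ≤ (k(k+1)²(k+2)/h²) · ∫_I v(x)² dx. -/
open Polynomial MeasureTheory intervalIntegral Finset
open scoped Nat

namespace Stmt8

-- paste base here when assembling; for now import-free dev: copy base content
noncomputable def Pint (a b : ℝ) (p : ℝ[X]) : ℝ := ∫ x in a..b, p.eval x

lemma pint_intable (a b : ℝ) (p : ℝ[X]) :
    IntervalIntegrable (fun x => p.eval x) volume a b :=
  (p.continuous_aeval).intervalIntegrable a b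

lemma pint_add (a b : ℝ) (p q : ℝ[X]) : Pint a b (p + q) = Pint a b p + Pint a b q := by
  unfold Pint
  simp only [eval_add]
  exact intervalIntegral.integral_add (pint_intable a b p) (pint_intable a b q)

lemma pint_smul (a b c : ℝ) (p : ℝ[X]) : Pint a b (C c * p) = c * Pint a b p := by
  unfold Pint
  simp only [eval_mul, eval_C]
  exact intervalIntegral.integral_const_mul c _

lemma pint_sum {ι : Type*} (a b : ℝ) (s : Finset ι) (f : ι → ℝ[X]) :
    Pint a b (∑ i ∈ s, f i) = ∑ i ∈ s, Pint a b (f i) := by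
  unfold Pint
  simp only [eval_finset_sum]
  exact intervalIntegral.integral_finset_sum (fun i _ => pint_intable a b (f i))

lemma pint_zero (a b : ℝ) : Pint a b 0 = 0 := by simp [Pint]

lemma pint_deriv (a b : ℝ) (p : ℝ[X]) :
    Pint a b (derivative p) = p.eval b - p.eval a := by
  unfold Pint
  exact integral_eq_sub_of_hasDerivAt (fun x _ => p.hasDerivAt x)
    (pint_intable a b _)

lemma pint_ibp (a b : ℝ) (p q : ℝ[X]) :
    Pint a b (p * derivative q) =
      p.eval b * q.eval b - p.eval a * q.eval a - Pint a b (derivative p * q) := by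
  have h := pint_deriv a b (p * q)
  rw [derivative_mul, pint_add] at h
  simp only [eval_mul] at h
  linarith

/-! ### Rodrigues polynomials -/

noncomputable def w (a b : ℝ) : ℝ[X] := (X - C a) * (X - C b)

noncomputable def M (a b : ℝ) (n : ℕ) : ℝ[X] := derivative^[n] ((w a b) ^ n)

lemma w_pow_eq (a b : ℝ) (n : ℕ) : (w a b) ^ n = (X - C a) ^ n * (X - C b) ^ n := by
  rw [w, mul_pow]

lemma vanish_eval (a b : ℝ) {n j : ℕ} (hj : j < n) (c : ℝ) (hc : c = a ∨ c = b) :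
    (derivative^[j] ((w a b) ^ n)).eval c = 0 := by
  have hdvd : (X - C c) ^ n ∣ (w a b) ^ n := by
    rcases hc with rfl | rfl
    · rw [w_pow_eq]; exact Dvd.intro _ rfl
    · rw [w_pow_eq]; exact Dvd.intro_left _ rfl
  have h2 : (X - C c) ^ (n - j) ∣ derivative^[j] ((w a b) ^ n) :=
    pow_sub_dvd_iterate_derivative_of_pow_dvd j hdvd
  obtain ⟨r, hr⟩ := h2
  rw [hr, eval_mul, eval_pow, eval_sub, eval_X, eval_C, sub_self,
    zero_pow (Nat.sub_ne_zero_of_lt hj), zero_mul]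

lemma pint_mul_M (a b : ℝ) (n : ℕ) (q : ℝ[X]) :
    ∀ j ≤ n, Pint a b (q * M a b n) =
      (-1 : ℝ) ^ j * Pint a b (derivative^[j] q * derivative^[n - j] ((w a b) ^ n)) := by
  intro j hj
  induction j with
  | zero => simp [M]
  | succ i ih =>
    have hi : i ≤ n := Nat.le_of_succ_le hj
    rw [ih hi]
    have hni : n - i = (n - (i + 1)) + 1 := by omega
    have : derivative^[n - i] ((w a b) ^ n)
        = derivative (derivative^[n - (i+1)] ((w a b) ^ n)) := by
      rw [hni, Function.iterate_succ_apply']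
    rw [this, pint_ibp, vanish_eval a b (by omega) a (Or.inl rfl),
      vanish_eval a b (by omega) b (Or.inr rfl)]
    rw [Function.iterate_succ_apply']
    ring

lemma pint_mul_M_eq_zero (a b : ℝ) {n : ℕ} {q : ℝ[X]} (hq : q.natDegree < n) :
    Pint a b (q * M a b n) = 0 := by
  rw [pint_mul_M a b n q n le_rfl, iterate_derivative_eq_zero hq, Nat.sub_self, zero_mul,
    pint_zero, mul_zero]

lemma natDegree_w_pow (a b : ℝ) (n : ℕ) : ((w a b) ^ n).natDegree = 2 * n := by
  have : (w a b).natDegree = 2 := by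
    rw [w]
    compute_degree!
  rw [natDegree_pow, this, Nat.mul_comm]

lemma M_natDegree_le (a b : ℝ) (n : ℕ) : (M a b n).natDegree ≤ n := by
  have := natDegree_iterate_derivative ((w a b) ^ n) n
  rw [natDegree_w_pow] at this
  rw [M]
  omega

lemma monic_w_pow (a b : ℝ) (n : ℕ) : ((w a b) ^ n).Monic :=
  ((monic_X_sub_C a).mul (monic_X_sub_C b)).pow n

lemma M_coeff_top (a b : ℝ) (n : ℕ) : (M a b n).coeff n = (2 * n).descFactorial n := by
  rw [M, coeff_iterate_derivative]
  have h1 : ((w a b) ^ n).coeff (n + n) = 1 := by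
    have := (monic_w_pow a b n).coeff_natDegree
    rwa [natDegree_w_pow, two_mul] at this
  rw [h1, two_mul]
  simp

lemma M_orthogonal (a b : ℝ) {m n : ℕ} (hmn : m < n) :
    Pint a b (M a b m * M a b n) = 0 :=
  pint_mul_M_eq_zero a b (lt_of_le_of_lt (M_natDegree_le a b m) hmn)

end Stmt8

namespace Stmt8
open Polynomial MeasureTheory intervalIntegral Finset
open scoped Nat

lemma pint_X_sub_pow (a b : ℝ) (m : ℕ) :
    Pint a b ((X - C a) ^ m) = (b - a) ^ (m + 1) / (m + 1) := by
  have hd : derivative ((X - C a) ^ (m + 1)) = C ((m : ℝ) + 1) * (X - C a) ^ m := by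
    rw [derivative_X_sub_C_pow]
    push_cast
    simp
  have h := pint_deriv a b ((X - C a) ^ (m + 1))
  rw [hd, pint_smul] at h
  simp only [eval_pow, eval_sub, eval_X, eval_C, sub_self,
    zero_pow (Nat.succ_ne_zero m)] at h
  have hm : (m : ℝ) + 1 ≠ 0 := by positivity
  field_simp at h ⊢
  linarith [h]

lemma pint_beta (a b : ℝ) : ∀ (n m : ℕ),
    Pint a b ((X - C a) ^ m * (X - C b) ^ n) =
      (-1 : ℝ) ^ n * (b - a) ^ (m + n + 1) * m ! * n ! / (m + n + 1)! := by
  intro n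
  induction n with
  | zero =>
    intro m
    simp only [pow_zero, mul_one]
    rw [pint_X_sub_pow]
    push_cast [Nat.factorial_succ]
    field_simp
    ring
  | succ n ih =>
    intro m
    have hibp := pint_ibp a b ((X - C a) ^ (m + 1)) ((X - C b) ^ (n + 1))
    rw [derivative_X_sub_C_pow, derivative_X_sub_C_pow] at hibp
    simp only [Nat.add_sub_cancel] at hibp
    simp only [eval_pow, eval_sub, eval_X, eval_C, sub_self,
      zero_pow (Nat.succ_ne_zero m), zero_pow (Nat.succ_ne_zero n),
      zero_mul, mul_zero, zero_sub, sub_zero] at hibp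
    have h1 : Pint a b ((X - C a) ^ (m+1) * (C ((n:ℝ)+1) * (X - C b) ^ n))
        = ((n:ℝ)+1) * Pint a b ((X - C a) ^ (m+1) * (X - C b) ^ n) := by
      rw [show (X - C a) ^ (m+1) * (C ((n:ℝ)+1) * (X - C b) ^ n)
          = C ((n:ℝ)+1) * ((X - C a) ^ (m+1) * (X - C b) ^ n) by ring, pint_smul]
    have h2 : Pint a b (C ((m:ℝ)+1) * (X - C a) ^ m * (X - C b) ^ (n+1))
        = ((m:ℝ)+1) * Pint a b ((X - C a) ^ m * (X - C b) ^ (n+1)) := by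
      rw [show C ((m:ℝ)+1) * (X - C a) ^ m * (X - C b) ^ (n+1)
          = C ((m:ℝ)+1) * ((X - C a) ^ m * (X - C b) ^ (n+1)) by ring, pint_smul]
    push_cast at hibp h1 h2
    rw [h1, ih (m+1)] at hibp
    -- hibp : (n+1) * ((-1)^n * (b-a)^(m+1+n+1) * (m+1)! * n! / (m+1+n+1)!) = - ((m+1) * J m (n+1))
    rw [h2] at hibp
    have hm1 : (m : ℝ) + 1 ≠ 0 := by positivity
    have key : Pint a b ((X - C a) ^ m * (X - C b) ^ (n+1))
        = -(((n:ℝ)+1) * ((-1 : ℝ) ^ n * (b - a) ^ (m + 1 + n + 1) * (m+1)! * n ! / (m + 1 + n + 1)!)) / ((m:ℝ)+1) := by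
      field_simp at hibp ⊢
      linarith
    rw [key]
    have e1 : m + 1 + n + 1 = m + (n + 1) + 1 := by omega
    rw [e1]
    have hfm : ((m+1)! : ℝ) = ((m:ℝ)+1) * m ! := by
      rw [Nat.factorial_succ]; push_cast; ring
    have hfn : ((n+1)! : ℝ) = ((n:ℝ)+1) * n ! := by
      rw [Nat.factorial_succ]; push_cast; ring
    have hfac : ((m + (n+1) + 1)! : ℝ) ≠ 0 := by positivity
    rw [hfm]
    push_cast [hfn]
    field_simp
    ring

lemma pint_w_pow (a b : ℝ) (n : ℕ) :
    Pint a b ((w a b) ^ n) = (-1:ℝ)^n * (b - a) ^ (2*n + 1) * n ! * n ! / (2*n + 1)! := by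
  rw [w_pow_eq, pint_beta]
  ring_nf

lemma descF_fact (n : ℕ) : n ! * (2*n).descFactorial n = (2*n)! := by
  have h := Nat.factorial_mul_descFactorial (n := 2*n) (k := n) (by omega)
  rwa [show 2*n - n = n by omega] at h

lemma M_norm (a b : ℝ) (n : ℕ) :
    Pint a b (M a b n * M a b n) = ((n ! : ℝ))^2 * (b - a) ^ (2*n+1) / (2*n+1) := by
  rw [pint_mul_M a b n (M a b n) n le_rfl, Nat.sub_self]
  have hDn : derivative^[n] (M a b n) = C (((2*n)! : ℝ)) := by
    have hle : (derivative^[n] (M a b n)).natDegree ≤ 0 := by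
      have h1 := natDegree_iterate_derivative (M a b n) n
      have h2 := M_natDegree_le a b n
      omega
    rw [Polynomial.eq_C_of_natDegree_le_zero hle]
    congr 1
    rw [Polynomial.coeff_iterate_derivative]
    have h0 : (M a b n).coeff (0 + n) = (2*n).descFactorial n := by
      simpa using M_coeff_top a b n
    rw [h0, nsmul_eq_mul, ← Nat.cast_mul, Nat.zero_add, Nat.descFactorial_self, descF_fact]
  rw [Function.iterate_zero_apply, hDn, pint_smul, pint_w_pow]
  have hfacs : ((2*n+1)! : ℝ) = (2*n+1) * (2*n)! := by
    rw [Nat.factorial_succ]; push_cast; ring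
  have h1 : ((2*n)! : ℝ) ≠ 0 := by positivity
  have h2 : ((2*n:ℕ) : ℝ) + 1 ≠ 0 := by positivity
  have hsq : ((-1:ℝ))^n * (-1:ℝ)^n = 1 := by
    rw [← pow_add, ← two_mul, pow_mul]; norm_num
  rw [hfacs]
  field_simp
  push_cast
  linear_combination ((b-a)^(2*n+1)) * hsq

end Stmt8

namespace Stmt8
open Polynomial MeasureTheory intervalIntegral Finset
open scoped Nat

lemma eval_iter_deriv_self (c : ℝ) (n j : ℕ) :
    (derivative^[j] ((X - C c) ^ n)).eval c = if j = n then (n ! : ℝ) else 0 := by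
  rw [iterate_derivative_X_sub_pow]
  rw [eval_smul]
  simp only [eval_pow, eval_sub, eval_X, eval_C, sub_self, smul_eq_mul]
  rcases lt_trichotomy j n with h | rfl | h
  · simp [if_neg h.ne, zero_pow (Nat.sub_ne_zero_of_lt h)]
  · simp [Nat.descFactorial_self]
  · rw [if_neg h.ne', Nat.descFactorial_eq_zero_iff_lt.mpr h]
    simp

lemma eval_iter_deriv (c x : ℝ) (n j : ℕ) :
    (derivative^[j] ((X - C c) ^ n)).eval x = (n.descFactorial j : ℝ) * (x - c) ^ (n - j) := by
  rw [iterate_derivative_X_sub_pow, eval_smul]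
  simp [smul_eq_mul]

lemma M_leibniz (a b : ℝ) (n j : ℕ) :
    derivative^[j] ((w a b) ^ n) = ∑ k ∈ range (j + 1),
      j.choose k • (derivative^[j - k] ((X - C a) ^ n) * derivative^[k] ((X - C b) ^ n)) := by
  rw [w_pow_eq, iterate_derivative_mul]

lemma M_eval_b (a b : ℝ) (n : ℕ) : (M a b n).eval b = (n ! : ℝ) * (b - a) ^ n := by
  rw [M, M_leibniz, eval_finset_sum]
  rw [Finset.sum_eq_single n]
  · rw [Nat.choose_self, one_smul, Nat.sub_self, eval_mul, Function.iterate_zero_apply,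
      eval_iter_deriv_self, if_pos rfl]
    simp [mul_comm]
  · intro k hk hkn
    rw [eval_smul, eval_mul, eval_iter_deriv_self, if_neg hkn]
    simp
  · intro h
    exact absurd (Finset.self_mem_range_succ n) h

lemma M_eval_a (a b : ℝ) (n : ℕ) : (M a b n).eval a = (-1:ℝ)^n * (n ! : ℝ) * (b - a) ^ n := by
  rw [M, M_leibniz, eval_finset_sum]
  rw [Finset.sum_eq_single 0]
  · rw [Nat.choose_zero_right, one_smul, Nat.sub_zero, eval_mul,
      eval_iter_deriv_self, if_pos rfl, Function.iterate_zero_apply]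
    simp only [eval_pow, eval_sub, eval_X, eval_C]
    rw [show a - b = -(b - a) by ring, neg_pow]
    ring
  · intro k hk hkn
    have hk' := Finset.mem_range.mp hk
    rw [eval_smul, eval_mul, eval_iter_deriv_self, if_neg (by omega : n - k ≠ n)]
    simp
  · intro h
    exact absurd (Finset.mem_range.mpr (Nat.succ_pos n)) h

lemma dM_eval_b (a b : ℝ) (n : ℕ) :
    (b - a) * (derivative (M a b n)).eval b = ((n:ℝ)+1) * n * n ! * (b - a) ^ n := by
  have hd : derivative (M a b n) = derivative^[n+1] ((w a b) ^ n) := by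
    rw [M]
    exact (Function.iterate_succ_apply' derivative n _).symm
  rw [hd, M_leibniz, eval_finset_sum, Finset.sum_eq_single n]
  · rw [eval_smul, eval_mul, eval_iter_deriv_self, if_pos rfl,
      show n + 1 - n = 1 by omega, eval_iter_deriv]
    rcases Nat.eq_zero_or_pos n with rfl | hn
    · simp
    · rw [Nat.descFactorial_one, Nat.choose_succ_self_right]
      have : (b - a) * (b - a) ^ (n - 1) = (b - a) ^ n := by
        rw [← pow_succ']
        congr 1
        omega
      rw [nsmul_eq_mul]
      push_cast
      linear_combination (((n:ℝ)+1) * (n:ℝ) * (n ! : ℝ)) * this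
  · intro k hk hkn
    rw [eval_smul, eval_mul, eval_iter_deriv_self, if_neg hkn]
    simp
  · intro h
    exact absurd (Finset.mem_range.mpr (by omega)) h

lemma dM_eval_a (a b : ℝ) (n : ℕ) :
    (b - a) * (derivative (M a b n)).eval a = (-1:ℝ)^(n+1) * (((n:ℝ)+1) * n * n ! * (b - a) ^ n) := by
  have hd : derivative (M a b n) = derivative^[n+1] ((w a b) ^ n) := by
    rw [M]
    exact (Function.iterate_succ_apply' derivative n _).symm
  rw [hd, M_leibniz, eval_finset_sum, Finset.sum_eq_single 1]
  · rw [eval_smul, eval_mul, eval_iter_deriv_self,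
      show n + 1 - 1 = n by omega, if_pos rfl, eval_iter_deriv]
    rcases Nat.eq_zero_or_pos n with rfl | hn
    · simp
    · rw [Nat.descFactorial_one, Nat.choose_one_right]
      have h1 : (a - b) ^ (n - 1) = (-1:ℝ)^(n-1) * (b - a) ^ (n - 1) := by
        rw [show a - b = -(b - a) by ring, neg_pow]
      have h2 : (b - a) * (b - a) ^ (n - 1) = (b - a) ^ n := by
        rw [← pow_succ']
        congr 1
        omega
      have h3 : (-1:ℝ)^(n+1) = (-1:ℝ)^(n-1) := by
        rcases Nat.exists_eq_add_of_le hn with ⟨m, rfl⟩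
        rw [show 1 + m + 1 = m + 2 by omega, show 1 + m - 1 = m by omega]
        rw [pow_add]
        norm_num
      rw [nsmul_eq_mul]
      push_cast
      rw [h1, h3]
      linear_combination ((-1:ℝ)^(n-1) * ((n:ℝ)+1) * (n:ℝ) * (n ! : ℝ)) * h2
  · intro k hk hkn
    have hk' := Finset.mem_range.mp hk
    rw [eval_smul, eval_mul, eval_iter_deriv_self, if_neg (by omega : n + 1 - k ≠ n)]
    simp
  · intro h
    exact absurd (Finset.mem_range.mpr (by omega)) h

end Stmt8

namespace Stmt8
open Polynomial MeasureTheory intervalIntegral Finset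
open scoped Nat

lemma pint_dd_zero (a b : ℝ) {m n : ℕ} (hmn : m ≤ n) :
    Pint a b (derivative (derivative (M a b m)) * M a b n) = 0 := by
  rcases Nat.eq_zero_or_pos n with rfl | hn
  · interval_cases m
    simp [M, pint_zero]
  · apply pint_mul_M_eq_zero
    calc (derivative (derivative (M a b m))).natDegree
        ≤ (derivative (M a b m)).natDegree - 1 := natDegree_derivative_le _
      _ ≤ (M a b m).natDegree - 1 - 1 := by
          have := natDegree_derivative_le (M a b m)
          omega
      _ < n := by
          have := M_natDegree_le a b m
          omega

lemma G_formula (a b : ℝ) {m n : ℕ} (hmn : m ≤ n) :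
    (b - a) * Pint a b (derivative (M a b m) * derivative (M a b n))
      = (1 + (-1:ℝ)^(m+n)) * (((m:ℝ)+1) * m * m ! * n ! * (b-a)^(m+n)) := by
  have hibp := pint_ibp a b (derivative (M a b m)) (M a b n)
  rw [pint_dd_zero a b hmn, sub_zero] at hibp
  rw [hibp, pow_add (-1:ℝ), pow_add (b-a)]
  have e1 := dM_eval_b a b m
  have e2 := dM_eval_a a b m
  have e3 := M_eval_b a b n
  have e4 := M_eval_a a b n
  rw [pow_succ] at e2
  linear_combination ((M a b n).eval b) * e1 - ((M a b n).eval a) * e2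
    + ((((m:ℝ)+1) * m * m ! * (b-a)^m)) * e3
    + ((-1:ℝ)^m * (((m:ℝ)+1) * m * m ! * (b-a)^m)) * e4

lemma one_add_neg_one_pow_nonneg (j : ℕ) : 0 ≤ 1 + (-1:ℝ)^j := by
  rcases Nat.even_or_odd j with hj | hj
  · rw [hj.neg_one_pow]; norm_num
  · rw [hj.neg_one_pow]; norm_num

lemma one_add_neg_one_pow_le_two (j : ℕ) : 1 + (-1:ℝ)^j ≤ 2 := by
  rcases Nat.even_or_odd j with hj | hj
  · rw [hj.neg_one_pow]; norm_num
  · rw [hj.neg_one_pow]; norm_num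

lemma G_nonneg (a b : ℝ) (hab : a < b) (m n : ℕ) :
    0 ≤ Pint a b (derivative (M a b m) * derivative (M a b n)) := by
  have hh : (0:ℝ) < b - a := by linarith
  rcases le_total m n with hmn | hmn
  · have := G_formula a b hmn
    nlinarith [one_add_neg_one_pow_nonneg (m+n), pow_pos hh (m+n),
      mul_nonneg (mul_nonneg (mul_nonneg (mul_nonneg
        (by positivity : (0:ℝ) ≤ (m:ℝ)+1) (Nat.cast_nonneg m))
        (Nat.cast_nonneg (m !))) (Nat.cast_nonneg (n !))) (le_of_lt (pow_pos hh (m+n)))]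
  · have := G_formula a b hmn
    have hcomm : Pint a b (derivative (M a b m) * derivative (M a b n))
        = Pint a b (derivative (M a b n) * derivative (M a b m)) := by
      rw [mul_comm]
    rw [hcomm]
    nlinarith [one_add_neg_one_pow_nonneg (n+m), pow_pos hh (n+m),
      mul_nonneg (mul_nonneg (mul_nonneg (mul_nonneg
        (by positivity : (0:ℝ) ≤ (n:ℝ)+1) (Nat.cast_nonneg n))
        (Nat.cast_nonneg (n !))) (Nat.cast_nonneg (m !))) (le_of_lt (pow_pos hh (n+m)))]

lemma G_le_aux (a b : ℝ) (hab : a < b) {m n : ℕ} (hmn : m ≤ n) :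
    Pint a b (derivative (M a b m) * derivative (M a b n)) ≤
      2 / (b - a) * (Real.sqrt ((m:ℝ)*((m:ℝ)+1)) * m ! * (b-a)^m)
        * (Real.sqrt ((n:ℝ)*((n:ℝ)+1)) * n ! * (b-a)^n) := by
  have hh : (0:ℝ) < b - a := by linarith
  have hG := G_formula a b hmn
  set G := Pint a b (derivative (M a b m) * derivative (M a b n)) with hGdef
  have hGval : G = (1 + (-1:ℝ)^(m+n)) * (((m:ℝ)+1) * m * m ! * n ! * (b-a)^(m+n)) / (b-a) := by
    field_simp
    linarith [hG]
  rw [hGval]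
  rw [div_le_iff₀ hh]
  have key : (1 + (-1:ℝ)^(m+n)) * (((m:ℝ)+1) * m * m ! * n ! * (b-a)^(m+n))
      ≤ 2 * (Real.sqrt ((m:ℝ)*((m:ℝ)+1)) * Real.sqrt ((n:ℝ)*((n:ℝ)+1))
          * (m ! * n ! * (b-a)^(m+n))) := by
    have hs1 : Real.sqrt ((m:ℝ)*((m:ℝ)+1)) * Real.sqrt ((m:ℝ)*((m:ℝ)+1)) = (m:ℝ)*((m:ℝ)+1) :=
      Real.mul_self_sqrt (by positivity)
    have hs2 : Real.sqrt ((m:ℝ)*((m:ℝ)+1)) ≤ Real.sqrt ((n:ℝ)*((n:ℝ)+1)) := by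
      apply Real.sqrt_le_sqrt
      have : (m:ℝ) ≤ n := Nat.cast_le.mpr hmn
      nlinarith
    have hsmn : ((m:ℝ)+1) * m ≤ Real.sqrt ((m:ℝ)*((m:ℝ)+1)) * Real.sqrt ((n:ℝ)*((n:ℝ)+1)) := by
      calc ((m:ℝ)+1) * m = Real.sqrt ((m:ℝ)*((m:ℝ)+1)) * Real.sqrt ((m:ℝ)*((m:ℝ)+1)) := by
            rw [hs1]; ring
        _ ≤ _ := by
            apply mul_le_mul_of_nonneg_left hs2 (Real.sqrt_nonneg _)
    have hK : (0:ℝ) ≤ (m ! : ℝ) * n ! * (b-a)^(m+n) := by positivity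
    have h2 := one_add_neg_one_pow_le_two (m+n)
    have h0 := one_add_neg_one_pow_nonneg (m+n)
    calc (1 + (-1:ℝ)^(m+n)) * (((m:ℝ)+1) * m * m ! * n ! * (b-a)^(m+n))
        ≤ 2 * (((m:ℝ)+1) * m * (m ! * n ! * (b-a)^(m+n))) := by
          nlinarith [mul_nonneg (mul_nonneg (by positivity : (0:ℝ) ≤ ((m:ℝ)+1)) (Nat.cast_nonneg m)) hK]
      _ ≤ 2 * (Real.sqrt ((m:ℝ)*((m:ℝ)+1)) * Real.sqrt ((n:ℝ)*((n:ℝ)+1))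
            * (m ! * n ! * (b-a)^(m+n))) := by
          apply mul_le_mul_of_nonneg_left _ (by norm_num)
          exact mul_le_mul_of_nonneg_right hsmn hK
    
  calc (1 + (-1:ℝ)^(m+n)) * (((m:ℝ)+1) * m * m ! * n ! * (b-a)^(m+n))
      ≤ 2 * (Real.sqrt ((m:ℝ)*((m:ℝ)+1)) * Real.sqrt ((n:ℝ)*((n:ℝ)+1))
          * (m ! * n ! * (b-a)^(m+n))) := key
    _ = 2 / (b - a) * (Real.sqrt ((m:ℝ)*((m:ℝ)+1)) * m ! * (b-a)^m)
        * (Real.sqrt ((n:ℝ)*((n:ℝ)+1)) * n ! * (b-a)^n) * (b - a) := by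
        rw [pow_add]
        field_simp

lemma G_le (a b : ℝ) (hab : a < b) (m n : ℕ) :
    Pint a b (derivative (M a b m) * derivative (M a b n)) ≤
      2 / (b - a) * (Real.sqrt ((m:ℝ)*((m:ℝ)+1)) * m ! * (b-a)^m)
        * (Real.sqrt ((n:ℝ)*((n:ℝ)+1)) * n ! * (b-a)^n) := by
  rcases le_total m n with hmn | hmn
  · exact G_le_aux a b hab hmn
  · have h := G_le_aux a b hab hmn
    have hcomm : Pint a b (derivative (M a b m) * derivative (M a b n))
        = Pint a b (derivative (M a b n) * derivative (M a b m)) := by rw [mul_comm]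
    rw [hcomm]
    calc _ ≤ _ := h
      _ = _ := by ring

end Stmt8

namespace Stmt8
open Polynomial MeasureTheory intervalIntegral Finset
open scoped Nat

lemma M_zero (a b : ℝ) : M a b 0 = 1 := by simp [M]

lemma expand (a b : ℝ) : ∀ (k : ℕ) (v : ℝ[X]), v.natDegree ≤ k →
    ∃ c : ℕ → ℝ, v = ∑ n ∈ range (k+1), C (c n) * M a b n := by
  intro k
  induction k with
  | zero =>
    intro v hv
    refine ⟨fun _ => v.coeff 0, ?_⟩
    rw [Polynomial.eq_C_of_natDegree_le_zero hv]
    simp [M_zero]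
  | succ k ih =>
    intro v hv
    have hdpos : (0:ℝ) < ((2*(k+1)).descFactorial (k+1) : ℝ) := by
      have hne : (2*(k+1)).descFactorial (k+1) ≠ 0 := by
        rw [Ne, Nat.descFactorial_eq_zero_iff_lt]
        omega
      exact_mod_cast Nat.pos_of_ne_zero hne
    set d := v.coeff (k+1) / (((2*(k+1)).descFactorial (k+1) : ℝ)) with hd
    set v' := v - C d * M a b (k+1) with hv'
    have hdeg : v'.natDegree ≤ k := by
      refine natDegree_le_iff_coeff_eq_zero.mpr ?_
      intro j hj
      rw [hv', coeff_sub, coeff_C_mul]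
      rcases eq_or_lt_of_le (Nat.succ_le_of_lt hj) with hjk | hjk
      · rw [← hjk, M_coeff_top, hd, div_mul_cancel₀ _ (ne_of_gt hdpos), sub_self]
      · have h1 : v.coeff j = 0 := coeff_eq_zero_of_natDegree_lt (by omega)
        have h2 : (M a b (k+1)).coeff j = 0 :=
          coeff_eq_zero_of_natDegree_lt (lt_of_le_of_lt (M_natDegree_le a b (k+1)) (by omega))
        rw [h1, h2, mul_zero, sub_zero]
    obtain ⟨c, hc⟩ := ih v' hdeg
    refine ⟨Function.update c (k+1) d, ?_⟩
    rw [Finset.sum_range_succ]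
    have hcongr : ∀ n ∈ range (k+1),
        C (Function.update c (k+1) d n) * M a b n = C (c n) * M a b n := by
      intro n hn
      have := Finset.mem_range.mp hn
      rw [Function.update_of_ne (by omega)]
    rw [Finset.sum_congr rfl hcongr, ← hc, Function.update_self, hv']
    ring

lemma sum_cubes (k : ℕ) :
    ∑ n ∈ range (k+1), ((n:ℝ)*((n:ℝ)+1)*(2*(n:ℝ)+1))
      = (k:ℝ)*((k:ℝ)+1)^2*((k:ℝ)+2)/2 := by
  induction k with
  | zero => simp
  | succ k ih =>
    rw [Finset.sum_range_succ, ih]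
    push_cast
    ring

end Stmt8

namespace Stmt8
open Polynomial MeasureTheory intervalIntegral Finset
open scoped Nat

theorem main (a b : ℝ) (hab : a < b) (k : ℕ) (v : ℝ[X]) (hdeg : v.natDegree ≤ k) :
    Pint a b (derivative v * derivative v) ≤
      ((k:ℝ) * ((k:ℝ)+1)^2 * ((k:ℝ)+2) / (b-a)^2) * Pint a b (v * v) := by
  have hH : (0:ℝ) < b - a := by linarith
  obtain ⟨c, hc⟩ := expand a b k v hdeg
  set A : ℕ → ℝ := fun n => Real.sqrt ((n:ℝ)*((n:ℝ)+1)) * n ! * (b-a)^n with hA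
  set NN : ℕ → ℝ := fun n => ((n ! : ℝ))^2 * (b-a)^(2*n+1)/(2*(n:ℝ)+1) with hNN
  have horth : ∀ m n : ℕ, m ≠ n → Pint a b (M a b m * M a b n) = 0 := by
    intro m n hmn
    rcases lt_or_gt_of_ne hmn with h | h
    · exact M_orthogonal a b h
    · rw [mul_comm]; exact M_orthogonal a b h
  -- Pint (v*v)
  have hvv : v * v = ∑ m ∈ range (k+1), ∑ n ∈ range (k+1),
      C (c m * c n) * (M a b m * M a b n) := by
    rw [hc, Finset.sum_mul_sum]
    refine Finset.sum_congr rfl fun m _ => Finset.sum_congr rfl fun n _ => ?_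
    rw [C_mul]; ring
  have hMnorm : ∀ n : ℕ, Pint a b (M a b n * M a b n) = NN n := by
    intro n
    rw [M_norm, hNN]
  have hPvv : Pint a b (v*v) = ∑ n ∈ range (k+1), (c n)^2 * NN n := by
    rw [hvv, pint_sum]
    refine Finset.sum_congr rfl fun m hm => ?_
    rw [pint_sum, Finset.sum_eq_single m]
    · rw [pint_smul, hMnorm]; ring
    · intro n _ hne
      rw [pint_smul, horth m n hne.symm, mul_zero]
    · intro hm'; exact absurd hm hm'
  -- Pint (v' * v')
  have hdv : derivative v = ∑ n ∈ range (k+1), C (c n) * derivative (M a b n) := by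
    rw [hc, derivative_sum]
    exact Finset.sum_congr rfl fun n _ => derivative_C_mul _ _
  have hPdd : Pint a b (derivative v * derivative v)
      = ∑ m ∈ range (k+1), ∑ n ∈ range (k+1),
          (c m * c n) * Pint a b (derivative (M a b m) * derivative (M a b n)) := by
    rw [hdv, Finset.sum_mul_sum, pint_sum]
    refine Finset.sum_congr rfl fun m _ => ?_
    rw [pint_sum]
    refine Finset.sum_congr rfl fun n _ => ?_
    rw [show (C (c m) * derivative (M a b m)) * (C (c n) * derivative (M a b n))
        = C (c m * c n) * (derivative (M a b m) * derivative (M a b n)) by rw [C_mul]; ring,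
      pint_smul]
  have hbound : Pint a b (derivative v * derivative v)
      ≤ ∑ m ∈ range (k+1), ∑ n ∈ range (k+1),
          2/(b-a) * ((|c m| * A m) * (|c n| * A n)) := by
    rw [hPdd]
    refine Finset.sum_le_sum fun m _ => Finset.sum_le_sum fun n _ => ?_
    calc (c m * c n) * Pint a b (derivative (M a b m) * derivative (M a b n))
        ≤ |c m * c n| * Pint a b (derivative (M a b m) * derivative (M a b n)) :=
          mul_le_mul_of_nonneg_right (le_abs_self _) (G_nonneg a b hab m n)
      _ ≤ |c m * c n| * (2/(b-a) * (Real.sqrt ((m:ℝ)*((m:ℝ)+1)) * m ! * (b-a)^m)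
            * (Real.sqrt ((n:ℝ)*((n:ℝ)+1)) * n ! * (b-a)^n)) :=
          mul_le_mul_of_nonneg_left (G_le a b hab m n) (abs_nonneg _)
      _ = 2/(b-a) * ((|c m| * A m) * (|c n| * A n)) := by
          rw [abs_mul, hA]; ring
  have hfactor : ∑ m ∈ range (k+1), ∑ n ∈ range (k+1),
      2/(b-a) * ((|c m| * A m) * (|c n| * A n))
      = 2/(b-a) * (∑ n ∈ range (k+1), |c n| * A n)^2 := by
    rw [sq, Finset.sum_mul_sum, Finset.mul_sum]
    exact Finset.sum_congr rfl fun m _ => by rw [Finset.mul_sum]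
  -- Cauchy–Schwarz
  set f : ℕ → ℝ := fun n => |c n| * n ! * (b-a)^n * Real.sqrt ((b-a)/(2*(n:ℝ)+1)) with hf
  set g : ℕ → ℝ := fun n => Real.sqrt ((n:ℝ)*((n:ℝ)+1)) * Real.sqrt ((2*(n:ℝ)+1)/(b-a)) with hg
  have h2n1 : ∀ n : ℕ, (0:ℝ) < 2*(n:ℝ)+1 := by intro n; positivity
  have hfg : ∀ n : ℕ, f n * g n = |c n| * A n := by
    intro n
    have h1 : Real.sqrt ((b-a)/(2*(n:ℝ)+1)) * Real.sqrt ((2*(n:ℝ)+1)/(b-a)) = 1 := by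
      rw [← Real.sqrt_mul (by positivity)]
      rw [show (b-a)/(2*(n:ℝ)+1) * ((2*(n:ℝ)+1)/(b-a)) = 1 by
        field_simp]
      exact Real.sqrt_one
    rw [hf, hg, hA]
    calc |c n| * n ! * (b-a)^n * Real.sqrt ((b-a)/(2*(n:ℝ)+1))
        * (Real.sqrt ((n:ℝ)*((n:ℝ)+1)) * Real.sqrt ((2*(n:ℝ)+1)/(b-a)))
        = |c n| * n ! * (b-a)^n * Real.sqrt ((n:ℝ)*((n:ℝ)+1))
          * (Real.sqrt ((b-a)/(2*(n:ℝ)+1)) * Real.sqrt ((2*(n:ℝ)+1)/(b-a))) := by ring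
      _ = |c n| * (Real.sqrt ((n:ℝ)*((n:ℝ)+1)) * n ! * (b-a)^n) := by rw [h1]; ring
  have hfsq : ∀ n : ℕ, f n ^ 2 = (c n)^2 * NN n := by
    intro n
    have h1 : Real.sqrt ((b-a)/(2*(n:ℝ)+1)) ^ 2 = (b-a)/(2*(n:ℝ)+1) :=
      Real.sq_sqrt (by positivity)
    have h2 : ((b-a)^n)^2 * (b - a) = (b-a)^(2*n+1) := by
      rw [← pow_mul, ← pow_succ]
      congr 1
      omega
    simp only [hf, hNN]
    rw [mul_pow, mul_pow, mul_pow, h1, sq_abs, ← h2]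
    have := h2n1 n
    field_simp
  have hgsq : ∀ n : ℕ, g n ^ 2 = (n:ℝ)*((n:ℝ)+1) * ((2*(n:ℝ)+1)/(b-a)) := by
    intro n
    rw [hg, mul_pow, Real.sq_sqrt (by positivity), Real.sq_sqrt (by positivity)]
  have hCS := Finset.sum_mul_sq_le_sq_mul_sq (range (k+1)) f g
  rw [Finset.sum_congr rfl (fun n _ => hfg n)] at hCS
  rw [Finset.sum_congr rfl (fun n _ => hfsq n)] at hCS
  rw [Finset.sum_congr rfl (fun n _ => hgsq n)] at hCS
  have hsum2 : ∑ n ∈ range (k+1), (n:ℝ)*((n:ℝ)+1) * ((2*(n:ℝ)+1)/(b-a))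
      = (k:ℝ)*((k:ℝ)+1)^2*((k:ℝ)+2)/(2*(b-a)) := by
    have : ∀ n ∈ range (k+1), (n:ℝ)*((n:ℝ)+1) * ((2*(n:ℝ)+1)/(b-a))
        = ((n:ℝ)*((n:ℝ)+1)*(2*(n:ℝ)+1))/(b-a) := by
      intro n _; ring
    rw [Finset.sum_congr rfl this, ← Finset.sum_div, sum_cubes, div_div]
  rw [hsum2, ← hPvv] at hCS
  -- combine
  calc Pint a b (derivative v * derivative v)
      ≤ 2/(b-a) * (∑ n ∈ range (k+1), |c n| * A n)^2 := by
        rw [← hfactor]; exact hbound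
    _ ≤ 2/(b-a) * (Pint a b (v*v) * ((k:ℝ)*((k:ℝ)+1)^2*((k:ℝ)+2)/(2*(b-a)))) :=
        mul_le_mul_of_nonneg_left hCS (by positivity)
    _ = ((k:ℝ) * ((k:ℝ)+1)^2 * ((k:ℝ)+2) / (b-a)^2) * Pint a b (v * v) := by
        field_simp

end Stmt8


theorem stmt_8 (k : ℕ) (a h : ℝ) (hh : 0 < h)
    (v : Polynomial ℝ) (hdeg : v.natDegree ≤ k) :
    ∫ x in a..(a + h), (v.derivative.eval x) ^ 2 ≤
      ((k : ℝ) * ((k : ℝ) + 1) ^ 2 * ((k : ℝ) + 2) / h ^ 2)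
        * ∫ x in a..(a + h), (v.eval x) ^ 2 := by
  have h1 : ∫ x in a..(a+h), (v.derivative.eval x)^2
      = Stmt8.Pint a (a+h) (Polynomial.derivative v * Polynomial.derivative v) := by
    unfold Stmt8.Pint
    apply intervalIntegral.integral_congr
    intro x _
    simp [Polynomial.eval_mul, sq]
  have h2 : ∫ x in a..(a+h), (v.eval x)^2 = Stmt8.Pint a (a+h) (v * v) := by
    unfold Stmt8.Pint
    apply intervalIntegral.integral_congr
    intro x _
    simp [Polynomial.eval_mul, sq]
  rw [h1, h2]
  have := Stmt8.main a (a+h) (by linarith) k v hdeg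
  rwa [show a + h - a = h by ring] at this
end

section
/- Let v be a real polynomial of degree at most k on an interval I of length h, and let x₀ be an endpoint of I. Then v(x₀)² ≤ ((k+1)²/h) · ∫_I v(x)² dx. -/
open Polynomial intervalIntegral Finset

lemma poly_ftc (p : Polynomial ℝ) (a b : ℝ) :
    ∫ x in a..b, (derivative p).eval x = p.eval b - p.eval a := by
  refine integral_eq_sub_of_hasDerivAt (fun x _ => p.hasDerivAt x) ?_
  exact ((derivative p).continuous_aeval).intervalIntegrable a b

lemma poly_intgr (p : Polynomial ℝ) (a b : ℝ) :
    IntervalIntegrable (fun x => p.eval x) MeasureTheory.volume a b :=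
  (p.continuous_aeval).intervalIntegrable a b

lemma poly_ibp (p q : Polynomial ℝ) (a b : ℝ) :
    ∫ x in a..b, (derivative p).eval x * q.eval x
      = p.eval b * q.eval b - p.eval a * q.eval a
        - ∫ x in a..b, p.eval x * (derivative q).eval x := by
  have h := poly_ftc (p * q) a b
  rw [derivative_mul] at h
  have h2 : (∫ x in a..b, ((derivative p * q).eval x + (p * derivative q).eval x))
      = (∫ x in a..b, (derivative p).eval x * q.eval x)
        + ∫ x in a..b, p.eval x * (derivative q).eval x := by
    rw [integral_add]
    · simp
    · simpa using poly_intgr (derivative p * q) a b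
    · simpa using poly_intgr (p * derivative q) a b
  simp only [eval_add] at h
  rw [h2] at h
  simp only [eval_mul] at h
  linarith

noncomputable def QQ (n : ℕ) : Polynomial ℝ := derivative^[n] ((X ^ 2 - 1) ^ n)

lemma X2_factor : ((X:Polynomial ℝ) ^ 2 - 1) = (X - C 1) * (X - C (-1)) := by
  ring_nf; simp [C_1]; ring

-- vanishing of D^j (X²-1)^n at ±1 for j < n
lemma vanish (n j : ℕ) (hj : j < n) (c : ℝ) (hc : c = 1 ∨ c = -1) :
    (derivative^[j] ((X ^ 2 - 1) ^ n : Polynomial ℝ)).eval c = 0 := by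
  have hfac : ((X:Polynomial ℝ) ^ 2 - 1) ^ n = (X - C 1) ^ n * (X - C (-1)) ^ n := by
    rw [X2_factor, mul_pow]
  rw [hfac, iterate_derivative_mul, eval_finset_sum]
  refine Finset.sum_eq_zero fun i hi => ?_
  simp only [Finset.mem_range, Nat.lt_succ_iff] at hi
  rw [iterate_derivative_X_sub_pow, iterate_derivative_X_sub_pow]
  rcases hc with rfl | rfl
  · have h1 : n - (j - i) ≠ 0 := by omega
    simp [eval_pow, zero_pow h1]
  · have h1 : n - i ≠ 0 := by omega
    simp [eval_pow, zero_pow h1]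

lemma iter_ibp (n : ℕ) (p q : Polynomial ℝ)
    (hp : ∀ j < n, (derivative^[j] p).eval 1 = 0 ∧ (derivative^[j] p).eval (-1) = 0) :
    ∫ x in (-1:ℝ)..1, (derivative^[n] p).eval x * q.eval x
      = (-1 : ℝ) ^ n * ∫ x in (-1:ℝ)..1, p.eval x * (derivative^[n] q).eval x := by
  induction n generalizing q with
  | zero => simp
  | succ n ih =>
    rw [Function.iterate_succ_apply']
    rw [poly_ibp]
    obtain ⟨h1, h2⟩ := hp n (by omega)
    rw [h1, h2, ih (derivative q) (fun j hj => hp j (by omega))]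
    have : (derivative^[n] (derivative q) : Polynomial ℝ) = derivative^[n+1] q :=
      (Function.iterate_succ_apply derivative n q).symm
    rw [this]; ring

lemma natDegree_X2_pow (n : ℕ) : (((X:Polynomial ℝ) ^ 2 - 1) ^ n).natDegree = 2 * n := by
  have h : (((X:Polynomial ℝ) ^ 2 - 1)).natDegree = 2 := by
    compute_degree!
  rw [natDegree_pow, h]; ring

lemma coeff_X2_pow (n : ℕ) : (((X:Polynomial ℝ) ^ 2 - 1) ^ n).coeff (2 * n) = 1 := by
  have := Polynomial.Monic.pow (p := ((X:Polynomial ℝ) ^ 2 - 1)) (by monicity!) (n := n)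
  have h2 := this.coeff_natDegree
  rwa [natDegree_X2_pow] at h2

lemma QQ_natDegree_le (n : ℕ) : (QQ n).natDegree ≤ n := by
  have := natDegree_iterate_derivative (((X:Polynomial ℝ) ^ 2 - 1) ^ n) n
  rw [natDegree_X2_pow] at this
  simpa [QQ, two_mul] using this

lemma QQ_coeff (n : ℕ) : (QQ n).coeff n = ((2 * n).descFactorial n : ℝ) := by
  rw [QQ, coeff_iterate_derivative]
  have : n + n = 2 * n := by ring
  rw [this, coeff_X2_pow]
  simp

lemma QQ_coeff_ne (n : ℕ) : (QQ n).coeff n ≠ 0 := by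
  rw [QQ_coeff]
  have : (2 * n).descFactorial n ≠ 0 := by
    simp [Nat.descFactorial_eq_zero_iff_lt]; omega
  exact_mod_cast this

lemma QQ_eval_one (n : ℕ) : (QQ n).eval 1 = 2 ^ n * n.factorial := by
  have hfac : ((X:Polynomial ℝ) ^ 2 - 1) ^ n = (X - C 1) ^ n * (X - C (-1)) ^ n := by
    rw [X2_factor, mul_pow]
  rw [QQ, hfac, iterate_derivative_mul, eval_finset_sum]
  rw [Finset.sum_eq_single 0]
  · simp only [Nat.choose_zero_right, one_smul, Nat.sub_zero, Function.iterate_zero_apply]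
    rw [iterate_derivative_X_sub_pow_self]
    simp [mul_comm]
    norm_num
  · intro i hi hne
    rw [iterate_derivative_X_sub_pow, iterate_derivative_X_sub_pow]
    simp only [Finset.mem_range, Nat.lt_succ_iff] at hi
    have h1 : n - (n - i) ≠ 0 := by omega
    simp [eval_pow, zero_pow h1]
  · intro h; simp at h

-- D^(2n) (X²-1)^n = (2n)!
lemma iter2n (n : ℕ) :
    derivative^[2 * n] (((X:Polynomial ℝ) ^ 2 - 1) ^ n) = C (((2 * n).factorial : ℝ)) := by
  have hd : (derivative^[2 * n] (((X:Polynomial ℝ) ^ 2 - 1) ^ n)).natDegree = 0 := by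
    have := natDegree_iterate_derivative (((X:Polynomial ℝ) ^ 2 - 1) ^ n) (2 * n)
    rw [natDegree_X2_pow] at this; omega
  have := Polynomial.eq_C_of_natDegree_eq_zero hd
  rw [this, coeff_iterate_derivative]
  norm_num [coeff_X2_pow]
  rw [Nat.descFactorial_self]

lemma QQ_orth (m n : ℕ) (hmn : m < n) :
    ∫ x in (-1:ℝ)..1, (QQ n).eval x * (QQ m).eval x = 0 := by
  rw [QQ, iter_ibp n _ _ (fun j hj => ⟨vanish n j hj 1 (Or.inl rfl), vanish n j hj (-1) (Or.inr rfl)⟩)]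
  have : derivative^[n] (QQ m) = 0 := by
    apply iterate_derivative_eq_zero
    exact lt_of_le_of_lt (QQ_natDegree_le m) hmn
  rw [this]
  simp

noncomputable def J (n : ℕ) : ℝ := ∫ x in (-1:ℝ)..1, (1 - x^2)^n

lemma J_rec (n : ℕ) : (2*(n:ℝ)+3) * J (n+1) = (2*(n:ℝ)+2) * J n := by
  have key : derivative ((X : Polynomial ℝ) * (1 - X^2)^(n+1))
      = C (2*(n:ℝ)+3) * (1-X^2)^(n+1) - C (2*(n:ℝ)+2) * (1-X^2)^n := by
    rw [derivative_mul, derivative_pow]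
    simp only [derivative_X, derivative_sub, derivative_one, derivative_pow, derivative_X,
      Nat.add_sub_cancel, one_mul, mul_one]
    push_cast
    simp only [C_add, C_mul, C_1, map_ofNat]
    ring
  have hftc := poly_ftc ((X : Polynomial ℝ) * (1 - X^2)^(n+1)) (-1) 1
  rw [key] at hftc
  have hs : ∀ x : ℝ, (C (2*(n:ℝ)+3) * (1-X^2)^(n+1) - C (2*(n:ℝ)+2) * (1-X^2)^n).eval x
      = (2*(n:ℝ)+3) * (1-x^2)^(n+1) - (2*(n:ℝ)+2) * (1-x^2)^n := by
    intro x; simp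
  rw [intervalIntegral.integral_congr (fun x _ => hs x)] at hftc
  rw [intervalIntegral.integral_sub, intervalIntegral.integral_const_mul,
    intervalIntegral.integral_const_mul] at hftc
  · simp only [eval_mul, eval_X, eval_pow, eval_sub, eval_one, eval_pow, eval_X] at hftc
    norm_num at hftc
    rw [J, J]
    linarith
  · exact (Continuous.intervalIntegrable (by continuity) _ _)
  · exact (Continuous.intervalIntegrable (by continuity) _ _)

lemma J_val (n : ℕ) : J n = 2^(2*n+1) * (n.factorial)^2 / (2*n+1).factorial := by
  induction n with
  | zero => simp [J]; norm_num
  | succ n ih =>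
    have hrec := J_rec n
    have h3 : (2*(n:ℝ)+3) ≠ 0 := by positivity
    have : J (n+1) = (2*(n:ℝ)+2) * J n / (2*(n:ℝ)+3) := by
      field_simp at hrec ⊢; linarith
    rw [this, ih]
    have hf1 : ((2*(n+1)+1).factorial : ℝ) = (2*(n:ℝ)+3) * (2*(n:ℝ)+2) * (2*n+1).factorial := by
      have : 2*(n+1)+1 = (2*n+1) + 1 + 1 := by ring
      rw [this, Nat.factorial_succ, Nat.factorial_succ]
      push_cast; ring
    have hf2 : ((n+1).factorial : ℝ) = ((n:ℝ)+1) * n.factorial := by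
      rw [Nat.factorial_succ]; push_cast; ring
    have hpos1 : ((2*n+1).factorial : ℝ) ≠ 0 := by positivity
    rw [hf1, hf2]
    field_simp
    ring

lemma QQ_norm (n : ℕ) :
    ∫ x in (-1:ℝ)..1, ((QQ n).eval x)^2 = 2^(2*n+1) * ((n.factorial : ℝ))^2 / (2*n+1) := by
  have h1 : ∀ x ∈ Set.uIcc (-1:ℝ) 1, ((QQ n).eval x)^2 = (QQ n).eval x * (QQ n).eval x :=
    fun x _ => sq ((QQ n).eval x)
  rw [intervalIntegral.integral_congr h1]
  have h2 : ∫ x in (-1:ℝ)..1, (QQ n).eval x * (QQ n).eval x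
      = (-1:ℝ)^n * ∫ x in (-1:ℝ)..1, (((X:Polynomial ℝ)^2-1)^n).eval x * (derivative^[n] (QQ n)).eval x :=
    iter_ibp n _ (QQ n) (fun j hj => ⟨vanish n j hj 1 (Or.inl rfl), vanish n j hj (-1) (Or.inr rfl)⟩)
  have h3 : derivative^[n] (QQ n) = C (((2*n).factorial : ℝ)) := by
    rw [QQ, ← Function.iterate_add_apply]
    rw [show n + n = 2*n by ring]
    exact iter2n n
  rw [h2, h3]
  have h4 : ∀ x ∈ Set.uIcc (-1:ℝ) 1, (((X:Polynomial ℝ)^2-1)^n).eval x * (C (((2*n).factorial : ℝ))).eval x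
      = ((2*n).factorial : ℝ) * ((-1:ℝ)^n * (1-x^2)^n) := by
    intro x _
    simp only [eval_pow, eval_sub, eval_one, eval_pow, eval_X, eval_C]
    rw [show (x^2 - 1 : ℝ) = -(1 - x^2) by ring, neg_pow]
    ring
  rw [intervalIntegral.integral_congr h4, intervalIntegral.integral_const_mul,
    intervalIntegral.integral_const_mul]
  have h5 : (∫ x in (-1:ℝ)..1, (1-x^2)^n) = J n := rfl
  rw [h5, J_val]
  have h6 : ((2*n+1).factorial : ℝ) = (2*(n:ℝ)+1) * (2*n).factorial := by
    rw [Nat.factorial_succ]; push_cast; ring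
  have hp1 : ((2*n).factorial : ℝ) ≠ 0 := by positivity
  have hp2 : (2*(n:ℝ)+1) ≠ 0 := by positivity
  rw [h6]
  have h7 : ((-1:ℝ))^n * (-1:ℝ)^n = 1 := by
    rw [← pow_add, ← two_mul, pow_mul]; norm_num
  field_simp
  linear_combination h7

lemma QQ_zero : QQ 0 = 1 := by simp [QQ]

lemma span_QQ (k : ℕ) : ∀ v : Polynomial ℝ, v.natDegree ≤ k →
    ∃ c : ℕ → ℝ, v = ∑ n ∈ Finset.range (k+1), C (c n) * QQ n := by
  induction k with
  | zero =>
    intro v hv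
    refine ⟨fun _ => v.coeff 0, ?_⟩
    rw [Finset.sum_range_one, QQ_zero, mul_one]
    exact eq_C_of_natDegree_le_zero hv
  | succ k ih =>
    intro v hv
    set d := v.coeff (k+1) / (QQ (k+1)).coeff (k+1) with hd
    set w := v - C d * QQ (k+1) with hw
    have hwdeg : w.natDegree ≤ k := by
      rw [natDegree_le_iff_coeff_eq_zero]
      intro m hm
      rw [hw, coeff_sub, coeff_C_mul]
      rcases eq_or_lt_of_le (Nat.succ_le_of_lt hm) with heq | hlt
      · rw [← heq, hd, div_mul_cancel₀ _ (QQ_coeff_ne (k+1)), sub_self]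
      · rw [coeff_eq_zero_of_natDegree_lt (lt_of_le_of_lt hv hlt),
          coeff_eq_zero_of_natDegree_lt (lt_of_le_of_lt (QQ_natDegree_le (k+1)) hlt)]
        ring
    obtain ⟨c, hc⟩ := ih w hwdeg
    refine ⟨fun n => if n = k+1 then d else c n, ?_⟩
    rw [Finset.sum_range_succ]
    beta_reduce
    have : ∑ n ∈ Finset.range (k+1), C (if n = k+1 then d else c n) * QQ n
        = ∑ n ∈ Finset.range (k+1), C (c n) * QQ n := by
      refine Finset.sum_congr rfl fun n hn => ?_
      rw [if_neg (by simp at hn; omega)]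
    rw [this, if_pos rfl, ← hc, hw]
    ring

lemma integral_poly_sum (s : Finset ℕ) (f : ℕ → Polynomial ℝ) (g : Polynomial ℝ) (a b : ℝ) :
    ∫ x in a..b, (∑ n ∈ s, f n).eval x * g.eval x
      = ∑ n ∈ s, ∫ x in a..b, (f n).eval x * g.eval x := by
  rw [← intervalIntegral.integral_finset_sum]
  · apply intervalIntegral.integral_congr
    intro x _
    simp only [eval_finset_sum, Finset.sum_mul]
  · intro i _
    exact (((f i).continuous_aeval).mul (g.continuous_aeval)).intervalIntegrable a b

noncomputable def EE (n : ℕ) : ℝ := 2^(2*n+1) * ((n.factorial : ℝ))^2 / (2*n+1)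

lemma EE_eq (n : ℕ) : EE n = ((2:ℝ)^n * n.factorial)^2 * (2 / (2*(n:ℝ)+1)) := by
  rw [EE]
  field_simp
  ring

lemma cross (n m : ℕ) (h : n ≠ m) : ∫ x in (-1:ℝ)..1, (QQ n).eval x * (QQ m).eval x = 0 := by
  rcases lt_or_gt_of_ne h with h1 | h1
  · rw [intervalIntegral.integral_congr (g := fun x => (QQ m).eval x * (QQ n).eval x)
      (fun x _ => mul_comm _ _)]
    exact QQ_orth n m h1
  · exact QQ_orth m n h1

lemma sum_odd (m : ℕ) : ∑ n ∈ Finset.range m, (2*(n:ℝ)+1) = (m:ℝ)^2 := by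
  induction m with
  | zero => simp
  | succ m ih => rw [Finset.sum_range_succ, ih]; push_cast; ring

lemma main_ref (k : ℕ) (v : Polynomial ℝ) (hdeg : v.natDegree ≤ k) :
    (v.eval 1)^2 ≤ (((k:ℝ)+1)^2/2) * ∫ x in (-1:ℝ)..1, (v.eval x)^2 := by
  obtain ⟨c, hc⟩ := span_QQ k v hdeg
  -- integral expansion
  have hexp : (∫ x in (-1:ℝ)..1, (v.eval x)^2) = ∑ n ∈ Finset.range (k+1), (c n)^2 * EE n := by
    have hA : (∫ x in (-1:ℝ)..1, (v.eval x)^2)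
        = ∑ n ∈ Finset.range (k+1), ∫ x in (-1:ℝ)..1, (C (c n) * QQ n).eval x * v.eval x := by
      rw [← integral_poly_sum (Finset.range (k+1)) (fun n => C (c n) * QQ n) v (-1) 1, ← hc]
      exact intervalIntegral.integral_congr (fun x _ => sq (v.eval x))
    rw [hA]
    refine Finset.sum_congr rfl fun n hn => ?_
    have h1 : ∀ x ∈ Set.uIcc (-1:ℝ) 1, (C (c n) * QQ n).eval x * v.eval x
        = c n * ((QQ n).eval x * v.eval x) := by intro x _; simp; ring
    rw [intervalIntegral.integral_congr h1, intervalIntegral.integral_const_mul]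
    have h2 : (∫ x in (-1:ℝ)..1, (QQ n).eval x * v.eval x) = c n * EE n := by
      have hB : (∫ x in (-1:ℝ)..1, (QQ n).eval x * v.eval x)
          = ∑ m ∈ Finset.range (k+1), ∫ x in (-1:ℝ)..1, (C (c m) * QQ m).eval x * (QQ n).eval x := by
        rw [← integral_poly_sum (Finset.range (k+1)) (fun m => C (c m) * QQ m) (QQ n) (-1) 1, ← hc]
        exact intervalIntegral.integral_congr (fun x _ => mul_comm _ _)
      rw [hB, Finset.sum_eq_single n]
      · have h4 : ∀ x ∈ Set.uIcc (-1:ℝ) 1, (C (c n) * QQ n).eval x * (QQ n).eval x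
            = c n * ((QQ n).eval x)^2 := by intro x _; simp; ring
        rw [intervalIntegral.integral_congr h4, intervalIntegral.integral_const_mul,
          QQ_norm n]
        rfl
      · intro m _ hmn
        have h5 : ∀ x ∈ Set.uIcc (-1:ℝ) 1, (C (c m) * QQ m).eval x * (QQ n).eval x
            = c m * ((QQ m).eval x * (QQ n).eval x) := by intro x _; simp; ring
        rw [intervalIntegral.integral_congr h5, intervalIntegral.integral_const_mul,
          cross m n hmn, mul_zero]
      · intro h; exact absurd hn h
    rw [h2]; ring
  -- eval expansion
  have heval : v.eval 1 = ∑ n ∈ Finset.range (k+1), c n * ((2:ℝ)^n * n.factorial) := by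
    conv_lhs => rw [hc]
    rw [eval_finset_sum]
    refine Finset.sum_congr rfl fun n _ => ?_
    rw [eval_mul, eval_C, QQ_eval_one]
  -- Cauchy-Schwarz
  set β : ℕ → ℝ := fun n => (2:ℝ)^n * n.factorial with hβ
  have hpos : ∀ n : ℕ, (0:ℝ) < 2*(n:ℝ)+1 := fun n => by positivity
  have hCS := Finset.sum_mul_sq_le_sq_mul_sq (Finset.range (k+1))
    (fun n => c n * β n * Real.sqrt (2/(2*(n:ℝ)+1)))
    (fun n => Real.sqrt ((2*(n:ℝ)+1)/2))
  have hfg : ∀ n : ℕ, (c n * β n * Real.sqrt (2/(2*(n:ℝ)+1))) * Real.sqrt ((2*(n:ℝ)+1)/2)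
      = c n * β n := by
    intro n
    rw [mul_assoc, ← Real.sqrt_mul (by positivity)]
    have : (2/(2*(n:ℝ)+1)) * ((2*(n:ℝ)+1)/2) = 1 := by
      field_simp
    rw [this, Real.sqrt_one, mul_one]
  have hf2 : ∀ n : ℕ, (c n * β n * Real.sqrt (2/(2*(n:ℝ)+1)))^2 = (c n)^2 * EE n := by
    intro n
    rw [mul_pow, Real.sq_sqrt (by positivity), EE_eq, hβ]
    ring
  have hg2 : ∀ n : ℕ, (Real.sqrt ((2*(n:ℝ)+1)/2))^2 = (2*(n:ℝ)+1)/2 := by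
    intro n; rw [Real.sq_sqrt (by positivity)]
  simp only [hfg, hf2, hg2] at hCS
  have hsum2 : ∑ n ∈ Finset.range (k+1), (2*(n:ℝ)+1)/2 = ((k:ℝ)+1)^2/2 := by
    rw [← Finset.sum_div, sum_odd]
    push_cast; ring
  rw [hsum2] at hCS
  rw [heval, hexp]
  calc (∑ n ∈ Finset.range (k+1), c n * β n)^2
      ≤ (∑ n ∈ Finset.range (k+1), (c n)^2 * EE n) * (((k:ℝ)+1)^2/2) := hCS
    _ = ((k:ℝ)+1)^2/2 * ∑ n ∈ Finset.range (k+1), (c n)^2 * EE n := by ring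

lemma scale (k : ℕ) (v : Polynomial ℝ) (hdeg : v.natDegree ≤ k) (cc dd : ℝ) (hcc : cc ≠ 0) :
    (v.eval (cc*1+dd))^2
      ≤ (((k:ℝ)+1)^2/2) * (cc⁻¹ * ∫ x in (cc*(-1)+dd)..(cc*1+dd), (v.eval x)^2) := by
  set w := v.comp (C cc * X + C dd) with hw
  have hwdeg : w.natDegree ≤ k := by
    rw [hw, natDegree_comp, natDegree_linear hcc, mul_one]
    exact hdeg
  have hmain := main_ref k w hwdeg
  have hev : ∀ t : ℝ, w.eval t = v.eval (cc*t+dd) := by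
    intro t; rw [hw, eval_comp]; simp
  have hint : (∫ t in (-1:ℝ)..1, (w.eval t)^2)
      = cc⁻¹ * ∫ x in (cc*(-1)+dd)..(cc*1+dd), (v.eval x)^2 := by
    have : (∫ t in (-1:ℝ)..1, (w.eval t)^2)
        = ∫ t in (-1:ℝ)..1, (fun x => (v.eval x)^2) (cc*t+dd) := by
      apply intervalIntegral.integral_congr
      intro t _; simp only; rw [hev t]
    rw [this, intervalIntegral.integral_comp_mul_add (fun x => (v.eval x)^2) hcc dd]
    simp [smul_eq_mul]
  rw [hev 1] at hmain
  rw [hint] at hmain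
  exact hmain

theorem stmt_9 (k : ℕ) (a h x₀ : ℝ) (hh : 0 < h)
    (v : Polynomial ℝ) (hdeg : v.natDegree ≤ k)
    (hx₀ : x₀ = a ∨ x₀ = a + h) :
    (v.eval x₀) ^ 2 ≤ (((k : ℝ) + 1) ^ 2 / h) * ∫ x in a..(a + h), (v.eval x) ^ 2 := by
  have hh2 : (h/2 : ℝ) ≠ 0 := by positivity
  rcases hx₀ with h1 | h1 <;> rw [h1]
  -- first case block
  · -- left endpoint: cc = -h/2, dd = a + h/2
    have hcc : (-(h/2) : ℝ) ≠ 0 := by simpa using hh2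
    have hs := scale k v hdeg (-(h/2)) (a + h/2) hcc
    have e1 : (-(h/2))*1 + (a + h/2) = a := by ring
    have e2 : (-(h/2))*(-1) + (a + h/2) = a + h := by ring
    rw [e1, e2] at hs
    rw [intervalIntegral.integral_symm] at hs
    calc (v.eval a)^2
        ≤ (((k:ℝ)+1)^2/2) * ((-(h/2))⁻¹ * -∫ x in a..(a+h), (v.eval x)^2) := hs
      _ = (((k:ℝ)+1)^2/h) * ∫ x in a..(a+h), (v.eval x)^2 := by
          field_simp
  · -- right endpoint: cc = h/2
    have hs := scale k v hdeg (h/2) (a + h/2) hh2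
    have e1 : (h/2)*1 + (a + h/2) = a + h := by ring
    have e2 : (h/2)*(-1) + (a + h/2) = a := by ring
    rw [e1, e2] at hs
    calc (v.eval (a+h))^2
        ≤ (((k:ℝ)+1)^2/2) * ((h/2)⁻¹ * ∫ x in a..(a+h), (v.eval x)^2) := hs
      _ = (((k:ℝ)+1)^2/h) * ∫ x in a..(a+h), (v.eval x)^2 := by
          field_simp
end

section
/- With the limiter of the previous statement, if a smooth target function u satisfies u(x) ≥ 0 on I_j and the polynomial w approximates u, then for all x ∈ I_j, |w^δ(x) - w(x)| ≤ C(k)·(‖w - u‖_{L^∞(I_j)} + δ), where C(k) depends only on the polynomial degree k. -/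
open Polynomial Set

namespace St12

variable {n : ℕ}

/-- evaluation of the polynomial with coefficients `c` -/
def ev (n : ℕ) (c : Fin n → ℝ) (x : ℝ) : ℝ := ∑ i : Fin n, c i * x ^ (i : ℕ)

lemma ev_cont (c : Fin n → ℝ) : Continuous (ev n c) := by
  unfold ev; fun_prop

lemma ev_smul (t : ℝ) (c : Fin n → ℝ) (x : ℝ) : ev n (t • c) x = t * ev n c x := by
  unfold ev; rw [Finset.mul_sum]; apply Finset.sum_congr rfl; intro i _
  simp [mul_assoc]

lemma ev_sub (c d : Fin n → ℝ) (x : ℝ) : ev n (c - d) x = ev n c x - ev n d x := by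
  unfold ev; rw [← Finset.sum_sub_distrib]; apply Finset.sum_congr rfl; intro i _
  simp [sub_mul]

lemma ev_single_zero (hn : 0 < n) (x : ℝ) : ev n (Pi.single (⟨0, hn⟩ : Fin n) 1) x = 1 := by
  unfold ev
  rw [Finset.sum_eq_single (⟨0, hn⟩ : Fin n)]
  · simp
  · intro b _ hb; simp [Pi.single_eq_of_ne hb]
  · simp

lemma ev_abs_le (c : Fin n → ℝ) {x : ℝ} (hx : x ∈ Icc (0:ℝ) 1) :
    |ev n c x| ≤ n * ‖c‖ := by
  unfold ev
  calc |∑ i : Fin n, c i * x ^ (i:ℕ)| ≤ ∑ i : Fin n, |c i * x ^ (i:ℕ)| :=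
        Finset.abs_sum_le_sum_abs _ _
    _ ≤ ∑ i : Fin n, ‖c‖ := by
        apply Finset.sum_le_sum; intro i _
        rw [abs_mul]
        have h1 : |c i| ≤ ‖c‖ := by
          rw [← Real.norm_eq_abs]; exact norm_le_pi_norm c i
        have h2 : |x ^ (i:ℕ)| ≤ 1 := by
          rw [abs_pow]; apply pow_le_one₀ (abs_nonneg x)
          rw [abs_le]; exact ⟨by linarith [hx.1], hx.2⟩
        calc |c i| * |x ^ (i:ℕ)| ≤ |c i| * 1 := by
              exact mul_le_mul_of_nonneg_left h2 (abs_nonneg _)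
          _ = |c i| := mul_one _
          _ ≤ ‖c‖ := h1
    _ = n * ‖c‖ := by simp [Finset.sum_const, nsmul_eq_mul]

/-- average over [0,1] -/
noncomputable def av (n : ℕ) (c : Fin n → ℝ) : ℝ := ∫ x in (0:ℝ)..1, ev n c x

lemma av_eq_sum (c : Fin n → ℝ) : av n c = ∑ i : Fin n, c i / ((i:ℕ) + 1) := by
  unfold av ev
  rw [intervalIntegral.integral_finset_sum]
  · apply Finset.sum_congr rfl; intro i _
    rw [intervalIntegral.integral_const_mul, integral_pow]
    simp [div_eq_mul_inv]
  · intro i _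
    exact (Continuous.intervalIntegrable (by fun_prop) _ _)

lemma av_cont : Continuous (av n) := by
  have : av n = fun c : Fin n → ℝ => ∑ i : Fin n, c i / ((i:ℕ) + 1) := by
    funext c; exact av_eq_sum c
  rw [this]; fun_prop

lemma av_smul (t : ℝ) (c : Fin n → ℝ) : av n (t • c) = t * av n c := by
  rw [av_eq_sum, av_eq_sum, Finset.mul_sum]
  apply Finset.sum_congr rfl; intro i _; simp [mul_div_assoc]

lemma av_sub (c d : Fin n → ℝ) : av n (c - d) = av n c - av n d := by
  rw [av_eq_sum, av_eq_sum, av_eq_sum, ← Finset.sum_sub_distrib]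
  apply Finset.sum_congr rfl; intro i _; simp [sub_div]

lemma av_single_zero (hn : 0 < n) : av n (Pi.single (⟨0, hn⟩ : Fin n) 1) = 1 := by
  unfold av
  have : ∀ x : ℝ, ev n (Pi.single (⟨0, hn⟩ : Fin n) 1) x = 1 := ev_single_zero hn
  rw [intervalIntegral.integral_congr (g := fun _ => (1:ℝ)) (fun x _ => this x)]
  simp

/-- min over [0,1] -/
noncomputable def minv (n : ℕ) (c : Fin n → ℝ) : ℝ := sInf (ev n c '' Icc 0 1)

lemma isLeast_minv (c : Fin n → ℝ) : IsLeast (ev n c '' Icc 0 1) (minv n c) := by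
  have hc : IsCompact (ev n c '' Icc (0:ℝ) 1) :=
    (isCompact_Icc).image (ev_cont c)
  obtain ⟨m, hm⟩ := hc.exists_isLeast ((nonempty_Icc.2 zero_le_one).image _)
  rwa [minv, hm.csInf_eq]

lemma minv_le (c : Fin n → ℝ) {x : ℝ} (hx : x ∈ Icc (0:ℝ) 1) : minv n c ≤ ev n c x :=
  (isLeast_minv c).2 ⟨x, hx, rfl⟩

lemma minv_mem (c : Fin n → ℝ) : ∃ x ∈ Icc (0:ℝ) 1, ev n c x = minv n c := by
  obtain ⟨x, hx, he⟩ := (isLeast_minv c).1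
  exact ⟨x, hx, he⟩

lemma minv_smul {t : ℝ} (ht : 0 ≤ t) (c : Fin n → ℝ) : minv n (t • c) = t * minv n c := by
  have h : IsLeast (ev n (t • c) '' Icc 0 1) (t * minv n c) := by
    constructor
    · obtain ⟨x, hx, he⟩ := minv_mem c
      exact ⟨x, hx, by rw [ev_smul, he]⟩
    · rintro y ⟨x, hx, rfl⟩
      rw [ev_smul]
      exact mul_le_mul_of_nonneg_left (minv_le c hx) ht
  rw [minv, h.csInf_eq]

lemma minv_sub_single (hn : 0 < n) (c : Fin n → ℝ) (r : ℝ) :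
    minv n (c - r • (Pi.single (⟨0, hn⟩ : Fin n) 1 : Fin n → ℝ)) = minv n c - r := by
  have key : ∀ x, ev n (c - r • (Pi.single (⟨0, hn⟩ : Fin n) 1 : Fin n → ℝ)) x = ev n c x - r := by
    intro x; rw [ev_sub, ev_smul, ev_single_zero hn, mul_one]
  have h : IsLeast (ev n (c - r • (Pi.single (⟨0, hn⟩ : Fin n) 1 : Fin n → ℝ)) '' Icc 0 1) (minv n c - r) := by
    constructor
    · obtain ⟨x, hx, he⟩ := minv_mem c
      exact ⟨x, hx, by rw [key, he]⟩
    · rintro y ⟨x, hx, rfl⟩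
      rw [key]
      linarith [minv_le c hx]
  rw [minv, h.csInf_eq]

lemma minv_lip (c d : Fin n → ℝ) : |minv n c - minv n d| ≤ n * ‖c - d‖ := by
  have key : ∀ x ∈ Icc (0:ℝ) 1, |ev n c x - ev n d x| ≤ n * ‖c - d‖ := by
    intro x hx; rw [← ev_sub]; exact ev_abs_le _ hx
  rw [abs_le]
  obtain ⟨xc, hxc, hec⟩ := minv_mem c
  obtain ⟨xd, hxd, hed⟩ := minv_mem d
  constructor
  · have h1 := minv_le d hxc
    have h2 := abs_le.1 (key xc hxc)
    linarith [hec ▸ h2.1]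
  · have h1 := minv_le c hxd
    have h2 := abs_le.1 (key xd hxd)
    linarith [hed ▸ h2.2]

lemma minv_cont : Continuous (minv n) := by
  rw [Metric.continuous_iff]
  intro c ε hε
  rcases Nat.eq_zero_or_pos n with hn | hn
  · exact ⟨1, one_pos, fun d _ => by
      subst hn
      simp [Real.dist_eq, minv, ev]
      have h0 : ∀ e : Fin 0 → ℝ, ev 0 e = fun _ => 0 := fun e => by funext x; simp [ev]
      rw [h0 d, h0 c, sub_self, abs_zero]
      exact hε⟩
  · refine ⟨ε / (2 * n), by positivity, fun d hd => ?_⟩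
    rw [Real.dist_eq]
    calc |minv n d - minv n c| ≤ n * ‖d - c‖ := minv_lip d c
      _ < ε := by
          have : ‖d - c‖ < ε / (2 * n) := by rwa [← dist_eq_norm]
          have hn' : (0:ℝ) < n := by exact_mod_cast hn
          calc (n:ℝ) * ‖d - c‖ < n * (ε / (2 * n)) := by
                apply mul_lt_mul_of_pos_left this hn'
            _ = ε / 2 := by field_simp
            _ < ε := by linarith


noncomputable def Pc (n : ℕ) (c : Fin n → ℝ) : Polynomial ℝ :=
  ∑ i : Fin n, Polynomial.C (c i) * Polynomial.X ^ (i:ℕ)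

lemma Pc_eval (c : Fin n → ℝ) (x : ℝ) : (Pc n c).eval x = ev n c x := by
  simp [Pc, ev, eval_finset_sum]

lemma Pc_coeff (c : Fin n → ℝ) (i : Fin n) : (Pc n c).coeff (i:ℕ) = c i := by
  rw [Pc, finset_sum_coeff, Finset.sum_eq_single i]
  · simp
  · intro b _ hb
    simp only [coeff_C_mul, coeff_X_pow]
    rw [if_neg (by simpa [Fin.val_eq_val] using hb.symm)]
    ring
  · simp

lemma c_eq_zero (c : Fin n → ℝ) (hmin : 0 ≤ minv n c) (hav : av n c = 0) : c = 0 := by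
  have hnn : ∀ x ∈ Ioc (0:ℝ) 1, 0 ≤ ev n c x := fun x hx =>
    le_trans hmin (minv_le c ⟨le_of_lt hx.1, hx.2⟩)
  have hint : IntervalIntegrable (ev n c) MeasureTheory.volume 0 1 :=
    (ev_cont c).intervalIntegrable _ _
  have hae : ev n c =ᵐ[MeasureTheory.volume.restrict (Ioc (0:ℝ) 1)] 0 := by
    rw [← intervalIntegral.integral_eq_zero_iff_of_le_of_nonneg_ae zero_le_one ?_ hint]
    · exact hav
    · filter_upwards [MeasureTheory.ae_restrict_mem measurableSet_Ioc] with x hx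
      exact hnn x hx
  have hPzero : Pc n c = 0 := by
    by_contra hP
    have hroots : Set.Finite {x : ℝ | (Pc n c).IsRoot x} := Polynomial.finite_setOf_isRoot hP
    have hne : MeasureTheory.volume ({x : ℝ | ev n c x ≠ 0} ∩ Ioc 0 1) = 0 := by
      have := MeasureTheory.ae_iff.1 hae
      rwa [MeasureTheory.Measure.restrict_apply (by
        exact (isClosed_eq (ev_cont c) continuous_const).isOpen_compl.measurableSet)] at this
    have hsub : Ioc (0:ℝ) 1 ⊆ {x : ℝ | (Pc n c).IsRoot x} ∪ ({x : ℝ | ev n c x ≠ 0} ∩ Ioc 0 1) := by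
      intro x hx
      by_cases h : ev n c x = 0
      · left; simp [Polynomial.IsRoot, Pc_eval, h]
      · right; exact ⟨h, hx⟩
    have : MeasureTheory.volume (Ioc (0:ℝ) 1) ≤ 0 := by
      calc MeasureTheory.volume (Ioc (0:ℝ) 1)
          ≤ MeasureTheory.volume ({x : ℝ | (Pc n c).IsRoot x} ∪ ({x : ℝ | ev n c x ≠ 0} ∩ Ioc 0 1)) :=
            MeasureTheory.measure_mono hsub
        _ ≤ MeasureTheory.volume {x : ℝ | (Pc n c).IsRoot x}
            + MeasureTheory.volume ({x : ℝ | ev n c x ≠ 0} ∩ Ioc 0 1) :=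
            MeasureTheory.measure_union_le _ _
        _ = 0 := by rw [hroots.measure_zero, hne]; simp
    simp [Real.volume_Ioc] at this
  funext i
  have := Pc_coeff c i
  rw [hPzero] at this
  simpa using this.symm

lemma minv_zero : minv n (0 : Fin n → ℝ) = 0 := by
  have := minv_smul (le_refl (0:ℝ)) (0 : Fin n → ℝ)
  simpa using this

lemma lemA : ∃ C : ℝ, 0 < C ∧ ∀ c : Fin n → ℝ, av n c = 0 →
    ∀ x ∈ Icc (0:ℝ) 1, |ev n c x| ≤ C * (0 - minv n c) := by
  set K : Set (Fin n → ℝ) := Metric.sphere 0 1 ∩ {c | av n c = 0} with hKdef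
  have hscale : ∀ c : Fin n → ℝ, av n c = 0 → c ≠ 0 → (‖c‖⁻¹ • c) ∈ K := by
    intro c hav hc
    have hnc : (0:ℝ) < ‖c‖ := norm_pos_iff.2 hc
    constructor
    · simp only [mem_sphere_iff_norm, sub_zero, norm_smul]
      rw [norm_inv, norm_norm]
      field_simp
    · show av n (‖c‖⁻¹ • c) = 0
      rw [av_smul, hav, mul_zero]
  by_cases hK : K.Nonempty
  · have hKc : IsCompact K :=
      (isCompact_sphere 0 1).inter_right (isClosed_eq av_cont continuous_const)
    obtain ⟨c0, hc0K, hmin⟩ := hKc.exists_isMinOn hK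
      ((continuous_neg.comp minv_cont).continuousOn)
    set ε : ℝ := -(minv n c0) with hεdef
    have hε : 0 < ε := by
      rcases lt_or_ge (minv n c0) 0 with h | h
      · simpa [hεdef] using h
      · exfalso
        have hc0 : c0 = 0 := c_eq_zero c0 h hc0K.2
        have := hc0K.1
        rw [hc0] at this
        simp at this
    refine ⟨(n + 1) / ε, by positivity, ?_⟩
    intro c hav x hx
    rcases eq_or_ne c 0 with rfl | hc
    · simp [minv_zero, ev]
    · have hnc : (0:ℝ) < ‖c‖ := norm_pos_iff.2 hc
      set c' := ‖c‖⁻¹ • c with hc'def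
      have hc'K : c' ∈ K := hscale c hav hc
      have hminc' : ε ≤ -(minv n c') := hmin hc'K
      have hnorm : ‖c'‖ = 1 := by simpa [mem_sphere_iff_norm] using hc'K.1
      have hbound : |ev n c' x| ≤ (n + 1) := by
        calc |ev n c' x| ≤ n * ‖c'‖ := ev_abs_le c' hx
          _ = n := by rw [hnorm, mul_one]
          _ ≤ n + 1 := by linarith
      have hkey : |ev n c' x| ≤ (n + 1) / ε * (0 - minv n c') := by
        calc |ev n c' x| ≤ (n + 1) := hbound
          _ = (n + 1) / ε * ε := by field_simp
          _ ≤ (n + 1) / ε * (0 - minv n c') := by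
              apply mul_le_mul_of_nonneg_left _ (by positivity)
              linarith
      have hcc : c = ‖c‖ • c' := by
        rw [hc'def, smul_smul]
        field_simp
        rw [one_smul]
      rw [hcc, ev_smul, minv_smul (le_of_lt hnc)]
      rw [abs_mul, abs_of_pos hnc]
      calc ‖c‖ * |ev n c' x| ≤ ‖c‖ * ((n + 1) / ε * (0 - minv n c')) :=
            mul_le_mul_of_nonneg_left hkey (le_of_lt hnc)
        _ = (n + 1) / ε * (0 - ‖c‖ * minv n c') := by ring
  · refine ⟨1, one_pos, ?_⟩
    intro c hav x hx
    rcases eq_or_ne c 0 with rfl | hc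
    · simp [minv_zero, ev]
    · exact absurd ⟨_, hscale c hav hc⟩ hK

lemma lemB (hn : 0 < n) : ∃ C : ℝ, 0 < C ∧ ∀ c : Fin n → ℝ,
    ∀ x ∈ Icc (0:ℝ) 1, |ev n c x - av n c| ≤ C * (av n c - minv n c) := by
  obtain ⟨C, hC, hA⟩ := lemA (n := n)
  refine ⟨C, hC, ?_⟩
  intro c x hx
  set c' : Fin n → ℝ := c - (av n c) • (Pi.single (⟨0, hn⟩ : Fin n) 1 : Fin n → ℝ) with hc'
  have hav' : av n c' = 0 := by
    rw [hc', av_sub, av_smul, av_single_zero hn, mul_one, sub_self]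
  have hev' : ev n c' x = ev n c x - av n c := by
    rw [hc', ev_sub, ev_smul, ev_single_zero hn, mul_one]
  have hmin' : minv n c' = minv n c - av n c := minv_sub_single hn c (av n c)
  have := hA c' hav' x hx
  rw [hev', hmin'] at this
  calc |ev n c x - av n c| ≤ C * (0 - (minv n c - av n c)) := this
    _ = C * (av n c - minv n c) := by ring

lemma poly01 (k : ℕ) : ∃ C : ℝ, 0 < C ∧ ∀ w : Polynomial ℝ, w.natDegree ≤ k →
    ∀ x ∈ Icc (0:ℝ) 1,
      |w.eval x - (∫ t in (0:ℝ)..1, w.eval t)| ≤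
        C * ((∫ t in (0:ℝ)..1, w.eval t) - sInf ((fun y => w.eval y) '' Icc 0 1)) := by
  obtain ⟨C, hC, hB⟩ := lemB (n := k + 1) (Nat.succ_pos k)
  refine ⟨C, hC, ?_⟩
  intro w hw x hx
  set c : Fin (k+1) → ℝ := fun i => w.coeff i with hcdef
  have hfun : ev (k+1) c = fun y => w.eval y := by
    funext y
    rw [ev, Polynomial.eval_eq_sum_range' (Nat.lt_succ_of_le hw) y,
      ← Fin.sum_univ_eq_sum_range (fun i => w.coeff i * y ^ i) (k+1)]
  have hav : av (k+1) c = ∫ t in (0:ℝ)..1, w.eval t := by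
    rw [av, hfun]
  have hminv : minv (k+1) c = sInf ((fun y => w.eval y) '' Icc 0 1) := by
    rw [minv, hfun]
  have := hB c x hx
  rw [hav, hminv, hfun] at this
  exact this

end St12

open St12 Set Polynomial in
theorem stmt_12 (k : ℕ) :
    ∃ C : ℝ, 0 < C ∧
      ∀ (a b δ wbar m M : ℝ) (w : Polynomial ℝ) (u : ℝ → ℝ),
        a < b → w.natDegree ≤ k →
        wbar = (b - a)⁻¹ * ∫ x in a..b, w.eval x →
        IsLeast ((fun x => w.eval x) '' Set.Icc a b) m →
        0 < δ → δ < wbar → m < δ →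
        ContinuousOn u (Set.Icc a b) →
        (∀ x ∈ Set.Icc a b, 0 ≤ u x) →
        (∀ x ∈ Set.Icc a b, |w.eval x - u x| ≤ M) →
        ∀ x ∈ Set.Icc a b,
          |(wbar + (wbar - δ) / (wbar - m) * (w.eval x - wbar)) - w.eval x| ≤ C * (M + δ) := by
  obtain ⟨C, hC, hP⟩ := poly01 k
  refine ⟨C, hC, ?_⟩
  intro a b δ wbar m M w u hab hdeg hwbar hm hδ hδwbar hmδ hu hupos hwu x hx
  have hba : (0:ℝ) < b - a := by linarith
  have hba' : b - a ≠ 0 := ne_of_gt hba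
  set q : Polynomial ℝ := w.comp (Polynomial.C (b - a) * Polynomial.X + Polynomial.C a) with hqdef
  have hqdeg : q.natDegree ≤ k := by
    rw [hqdef, natDegree_comp, natDegree_linear hba', mul_one]
    exact hdeg
  have hqeval : ∀ t : ℝ, q.eval t = w.eval ((b - a) * t + a) := by
    intro t; simp [hqdef, eval_comp]
  have himg : (fun t => q.eval t) '' Icc (0:ℝ) 1 = (fun y => w.eval y) '' Icc a b := by
    ext y
    simp only [mem_image]
    constructor
    · rintro ⟨t, ht, rfl⟩
      refine ⟨(b - a) * t + a, ⟨by nlinarith [ht.1, ht.2], by nlinarith [ht.1, ht.2]⟩,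
        (hqeval t).symm⟩
    · rintro ⟨z, hz, rfl⟩
      refine ⟨(z - a) / (b - a), ⟨div_nonneg (by linarith [hz.1]) (le_of_lt hba),
        (div_le_one hba).2 (by linarith [hz.2])⟩, ?_⟩
      rw [hqeval]
      congr 1
      field_simp
      ring
  have hint : ∫ t in (0:ℝ)..1, q.eval t = wbar := by
    have h1 : ∫ t in (0:ℝ)..1, q.eval t = ∫ t in (0:ℝ)..1, w.eval ((b - a) * t + a) :=
      intervalIntegral.integral_congr (fun t _ => hqeval t)
    rw [h1, intervalIntegral.integral_comp_mul_add (fun y => w.eval y) hba' a]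
    rw [hwbar]
    norm_num
  have hm' : sInf ((fun t => q.eval t) '' Icc (0:ℝ) 1) = m := by
    rw [himg]; exact hm.csInf_eq
  -- key inequality
  have hxk : |w.eval x - wbar| ≤ C * (wbar - m) := by
    have ht : (x - a) / (b - a) ∈ Icc (0:ℝ) 1 :=
      ⟨div_nonneg (by linarith [hx.1]) (le_of_lt hba),
        (div_le_one hba).2 (by linarith [hx.2])⟩
    have := hP q hqdeg _ ht
    rw [hint, hm', hqeval] at this
    have hxx : (b - a) * ((x - a) / (b - a)) + a = x := by field_simp; ring
    rwa [hxx] at this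
  have hwm : (0:ℝ) < wbar - m := by linarith
  have hmM : -M ≤ m := by
    obtain ⟨x0, hx0, he0⟩ := hm.1
    have h1 := hwu x0 hx0
    have h2 := hupos x0 hx0
    have := abs_le.1 h1
    simp only at he0
    linarith [this.1]
  have key : wbar + (wbar - δ) / (wbar - m) * (w.eval x - wbar) - w.eval x
      = -((δ - m) / (wbar - m) * (w.eval x - wbar)) := by
    field_simp
    ring
  rw [key, abs_neg, abs_mul, abs_of_pos (div_pos (by linarith) hwm)]
  calc (δ - m) / (wbar - m) * |w.eval x - wbar|
      ≤ (δ - m) / (wbar - m) * (C * (wbar - m)) := by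
        apply mul_le_mul_of_nonneg_left hxk
        exact le_of_lt (div_pos (by linarith) hwm)
    _ = C * (δ - m) := by field_simp
    _ ≤ C * (M + δ) := by
        apply mul_le_mul_of_nonneg_left _ (le_of_lt hC)
        linarith
end
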